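/- arXiv:1901.10247 — 4 statements merged into one kernel-verified Lean document; each statement's English description precedes it below -/
import Mathlib

section
/- (Kotzig's theorem.) Let G be a finite nonempty graph that admits a unique perfect matching M. Then M contains a bridge of G, i.e., there exists an edge e ∈ M whose removal increases the number of connected components of G. -/
universe u

/-- A set of edges `M` is a perfect matching of the simple graph `G` if every edge of `M`
is an edge of `G` and every vertex belongs to exactly one edge of `M`. -/
def IsPerfectMatchingOf {V : Type*} (G : SimpleGraph V) (M : Set (Sym2 V)) : Prop :=
  M ⊆ G.edgeSet ∧ ∀ v : V, ∃! e, e ∈ M ∧ v ∈ e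

namespace Kotzig
open SimpleGraph
open scoped symmDiff

set_option linter.unusedSectionVars false

section Basic
variable {V : Type*} {G : SimpleGraph V} {M : Set (Sym2 V)}
lemma exists_partner (hM : IsPerfectMatchingOf G M) (v : V) :
    ∃ u, G.Adj v u ∧ s(v, u) ∈ M ∧ ∀ x, s(v, x) ∈ M → x = u := by
  obtain ⟨e, ⟨heM, hve⟩, hu⟩ := hM.2 v
  have hedge : e ∈ G.edgeSet := hM.1 heM
  induction e with
  | _ a b =>
    rw [Sym2.mem_iff] at hve
    have hab : G.Adj a b := hedge
    rcases hve with rfl | rfl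
    · refine ⟨b, hab, heM, fun x hx => ?_⟩
      have := hu s(v, x) ⟨hx, Sym2.mem_mk_left _ _⟩
      exact (Sym2.congr_right.mp this)
    · refine ⟨a, hab.symm, Sym2.eq_swap ▸ heM, fun x hx => ?_⟩
      have h2 := hu s(v, x) ⟨hx, Sym2.mem_mk_left _ _⟩
      rw [show s(a,v) = s(v,a) from Sym2.eq_swap] at h2
      exact (Sym2.congr_right.mp h2)

lemma uniq_edge_of_uniq_nbr (H : SimpleGraph V) (v : V) (h : ∃! w, H.Adj v w) :
    ∃! e, e ∈ H.edgeSet ∧ v ∈ e := by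
  obtain ⟨w, hw, hwu⟩ := h
  refine ⟨s(v, w), ⟨hw, Sym2.mem_mk_left _ _⟩, ?_⟩
  rintro e ⟨heH, hve⟩
  induction e with
  | _ a b =>
    rw [Sym2.mem_iff] at hve
    have hab : H.Adj a b := heH
    rcases hve with rfl | rfl
    · rw [hwu b hab]
    · rw [hwu a hab.symm, Sym2.eq_swap]

lemma pm_eq_of_subset {N N' : Set (Sym2 V)} (hN : IsPerfectMatchingOf G N)
    (hN' : IsPerfectMatchingOf G N') (hsub : N ⊆ N') : N = N' := by
  refine Set.Subset.antisymm hsub fun e he => ?_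
  have hG := hN'.1 he
  induction e with
  | _ a b =>
    obtain ⟨u, _, huM, hux⟩ := exists_partner hN a
    obtain ⟨e', he'⟩ := hN'.2 a
    have h1 : e' = s(a, b) := (he'.2 s(a,b) ⟨he, Sym2.mem_mk_left _ _⟩).symm
    have h2 : e' = s(a, u) := (he'.2 s(a,u) ⟨hsub huM, Sym2.mem_mk_left _ _⟩).symm
    have : b = u := Sym2.congr_right.mp (h1 ▸ h2)
    rw [this]; exact huM

/-- The matching as a subgraph of `G`. -/
def matchSub (hM : IsPerfectMatchingOf G M) : Subgraph G where
  verts := Set.univ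
  Adj u v := s(u, v) ∈ M
  adj_sub h := hM.1 h
  edge_vert _ := Set.mem_univ _
  symm := ⟨fun u v h => by show s(v, u) ∈ M; rw [Sym2.eq_swap]; exact h⟩

lemma matchSub_isPM (hM : IsPerfectMatchingOf G M) : (matchSub hM).IsPerfectMatching := by
  rw [Subgraph.isPerfectMatching_iff]
  intro v
  obtain ⟨u, hadj, huM, hux⟩ := exists_partner hM v
  exact ⟨u, huM, fun y hy => hux y hy⟩

lemma matchSub_spanningCoe_adj (hM : IsPerfectMatchingOf G M) (u v : V) :
    (matchSub hM).spanningCoe.Adj u v ↔ s(u, v) ∈ M := Iff.rfl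

lemma matchSub_edgeSet (hM : IsPerfectMatchingOf G M) :
    (matchSub hM).spanningCoe.edgeSet = M := by
  ext e
  induction e with
  | _ a b => rfl

/-- There is no `M`-alternating cycle (given as a closed walk on `ℕ`-indices,
injective on `[0, m)`, with edges in `M` exactly at even indices). -/
lemma no_alt_cycle (hM : IsPerfectMatchingOf G M)
    (huniq : ∀ M', IsPerfectMatchingOf G M' → M' = M)
    (m : ℕ) (hme : Even m) (hm3 : 3 ≤ m) (d : ℕ → V)
    (hinj : ∀ i < m, ∀ j < m, d i = d j → i = j)
    (hwrap : d m = d 0)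
    (hadj : ∀ i < m, G.Adj (d i) (d (i + 1)))
    (halt : ∀ i < m, (s(d i, d (i + 1)) ∈ M ↔ Even i)) : False := by
  have hm2 : m % 2 = 0 := Nat.even_iff.mp hme
  haveI : NeZero m := ⟨by omega⟩
  haveI : Fact (1 < m) := ⟨by omega⟩
  set c : ZMod m → V := fun i => d i.val with hc
  have hsucc : ∀ i : ZMod m, ((i + 1).val = i.val + 1 ∧ i.val + 1 < m) ∨
      (i.val = m - 1 ∧ (i + 1).val = 0) := by
    intro i
    have h1 : (i + 1).val = (i.val + 1) % m := by
      rw [ZMod.val_add, ZMod.val_one]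
    have h2 := ZMod.val_lt i
    rcases lt_or_ge (i.val + 1) m with h | h
    · left; exact ⟨by rw [h1, Nat.mod_eq_of_lt h], h⟩
    · right
      have : i.val + 1 = m := by omega
      refine ⟨by omega, by rw [h1, this, Nat.mod_self]⟩
  have hc_adj : ∀ i : ZMod m, G.Adj (c i) (c (i + 1)) := by
    intro i
    rcases hsucc i with ⟨h1, h2⟩ | ⟨h1, h2⟩
    · show G.Adj (d i.val) (d (i+1).val); rw [h1]; exact hadj _ (by omega)
    · show G.Adj (d i.val) (d (i+1).val)
      rw [h1, h2]
      have := hadj (m - 1) (by omega)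
      rwa [show m - 1 + 1 = m by omega, hwrap] at this
  have hc_alt : ∀ i : ZMod m, (s(c i, c (i + 1)) ∈ M ↔ Even i.val) := by
    intro i
    rcases hsucc i with ⟨h1, h2⟩ | ⟨h1, h2⟩
    · show s(d i.val, d (i+1).val) ∈ M ↔ _
      rw [h1]; exact halt _ (by omega)
    · show s(d i.val, d (i+1).val) ∈ M ↔ _
      rw [h1, h2]
      have := halt (m - 1) (by omega)
      rwa [show m - 1 + 1 = m by omega, hwrap] at this
  have hc_inj : Function.Injective c := by
    intro i j hij
    have := hinj i.val (ZMod.val_lt i) j.val (ZMod.val_lt j) hij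
    exact ZMod.val_injective m this
  have hflip : ∀ j : ZMod m, (Even ((j + 1).val) ↔ ¬ Even j.val) := by
    intro j
    rcases hsucc j with ⟨h1, h2⟩ | ⟨h1, h2⟩ <;>
      · rw [h1]; try rw [h2]
        rw [Nat.even_iff, Nat.even_iff]; omega
  set D : SimpleGraph V := SimpleGraph.fromEdgeSet
    (Set.range fun i : ZMod m => s(c i, c (i + 1))) with hD
  have hD_adj : ∀ u v, D.Adj u v ↔ (∃ i, s(c i, c (i + 1)) = s(u, v)) ∧ u ≠ v := by
    intro u v
    rw [hD, SimpleGraph.fromEdgeSet_adj]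
    simp [Set.mem_range]
  have hD_adj1 : ∀ j : ZMod m, D.Adj (c j) (c (j + 1)) := by
    intro j
    rw [hD_adj]
    exact ⟨⟨j, rfl⟩, (hc_adj j).ne⟩
  have hD_adj2 : ∀ j : ZMod m, D.Adj (c j) (c (j - 1)) := by
    intro j
    have := (hD_adj1 (j - 1)).symm
    rwa [sub_add_cancel] at this
  have hDnbr : ∀ (j : ZMod m) (x : V), D.Adj (c j) x → x = c (j + 1) ∨ x = c (j - 1) := by
    intro j x hx
    rw [hD_adj] at hx
    obtain ⟨⟨i, hi⟩, hne⟩ := hx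
    rw [Sym2.eq_iff] at hi
    rcases hi with ⟨h1, h2⟩ | ⟨h1, h2⟩
    · left; rw [← h2, hc_inj h1]
    · right
      have : i = j - 1 := by
        have := hc_inj h2
        rw [← this]; ring
      rw [← h1, this]
  have hDrange : ∀ u v, D.Adj u v → ∃ j, u = c j := by
    intro u v huv
    rw [hD_adj] at huv
    obtain ⟨⟨i, hi⟩, _⟩ := huv
    rw [Sym2.eq_iff] at hi
    rcases hi with ⟨h1, _⟩ | ⟨_, h2⟩
    exacts [⟨i, h1.symm⟩, ⟨i + 1, h2.symm⟩]
  have htwo : ∀ j : ZMod m, c (j + 1) ≠ c (j - 1) := by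
    intro j h
    have h2 : (j : ZMod m) + 1 = j - 1 := hc_inj h
    have h3 : ((2 : ℕ) : ZMod m) = 0 := by
      have : ((2 : ℕ) : ZMod m) = (j + 1) - (j - 1) := by push_cast; ring
      rw [this, h2, sub_self]
    rw [ZMod.natCast_eq_zero_iff] at h3
    have := Nat.le_of_dvd (by norm_num) h3
    omega
  have hcyc : D.IsCycles := by
    intro v ⟨x, hx⟩
    rw [SimpleGraph.mem_neighborSet] at hx
    obtain ⟨j, rfl⟩ := hDrange v x hx
    have : D.neighborSet (c j) = {c (j + 1), c (j - 1)} := by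
      ext y
      simp only [SimpleGraph.mem_neighborSet, Set.mem_insert_iff, Set.mem_singleton_iff]
      constructor
      · exact hDnbr j y
      · rintro (rfl | rfl)
        exacts [hD_adj1 j, hD_adj2 j]
    rw [this, Set.ncard_pair (htwo j)]
  have halt2 : D.IsAlternating (matchSub hM).spanningCoe := by
    intro v w w' hne hvw hvw'
    obtain ⟨j, rfl⟩ := hDrange v w hvw
    rw [matchSub_spanningCoe_adj, matchSub_spanningCoe_adj]
    have key : ∀ y z, y = c (j+1) → z = c (j-1) → (s(c j, y) ∈ M ↔ ¬s(c j, z) ∈ M) := by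
      rintro y z rfl rfl
      rw [hc_alt j]
      have h3 : s(c j, c (j - 1)) ∈ M ↔ Even ((j - 1).val) := by
        rw [Sym2.eq_swap]
        have := hc_alt (j - 1)
        rwa [sub_add_cancel] at this
      rw [h3]
      have := hflip (j - 1)
      rw [sub_add_cancel] at this
      rw [this]
    rcases hDnbr j w hvw with rfl | rfl <;> rcases hDnbr j w' hvw' with rfl | rfl
    · exact absurd rfl hne
    · exact key _ _ rfl rfl
    · have := key _ _ rfl rfl
      tauto
    · exact absurd rfl hne
  have hpm2 := SimpleGraph.Subgraph.IsPerfectMatching.symmDiff_of_isAlternating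
    (matchSub_isPM hM) halt2 hcyc
  set M₂ : Set (Sym2 V) := ((matchSub hM).spanningCoe ∆ D).edgeSet with hM₂
  have hM₂pm : IsPerfectMatchingOf G M₂ := by
    constructor
    · have hle : ((matchSub hM).spanningCoe ∆ D).edgeSet ⊆
          ((matchSub hM).spanningCoe ⊔ D).edgeSet :=
        SimpleGraph.edgeSet_mono symmDiff_le_sup
      intro e he
      have := hle he
      rw [SimpleGraph.edgeSet_sup] at this
      rcases this with h | h
      · rw [matchSub_edgeSet] at h; exact hM.1 h
      · rw [hD, SimpleGraph.edgeSet_fromEdgeSet] at h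
        obtain ⟨⟨i, rfl⟩, -⟩ := h
        exact (SimpleGraph.mem_edgeSet G).mpr (hc_adj i)
    · intro v
      rw [Subgraph.isPerfectMatching_iff] at hpm2
      have := hpm2 v
      simp only [SimpleGraph.toSubgraph_adj, Subgraph.top_adj] at this
      exact uniq_edge_of_uniq_nbr _ v this
  have hM₂M := huniq M₂ hM₂pm
  -- the edge at index 1 is in D but not in M, yet in M₂ = M
  have h1v : (1 : ZMod m).val = 1 := ZMod.val_one m
  have he1 : s(c 1, c (1 + 1)) ∉ M := by
    rw [hc_alt 1, h1v]
    simp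
  have he1D : D.Adj (c 1) (c (1 + 1)) := hD_adj1 1
  have he1M₂ : s(c 1, c (1 + 1)) ∈ M₂ := by
    rw [hM₂]
    rw [SimpleGraph.mem_edgeSet]
    rw [symmDiff_def]
    simp only [SimpleGraph.sup_adj, SimpleGraph.sdiff_adj]
    right
    exact ⟨he1D, by rwa [matchSub_spanningCoe_adj]⟩
  rw [hM₂M] at he1M₂
  exact he1 he1M₂

structure PartnerFn (G : SimpleGraph V) (M : Set (Sym2 V)) (pf : V → V) : Prop where
  adj : ∀ v, G.Adj v (pf v)
  mem : ∀ v, s(v, pf v) ∈ M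
  uniq : ∀ v x, s(v, x) ∈ M → x = pf v

lemma exists_partnerFn (hM : IsPerfectMatchingOf G M) : ∃ pf, PartnerFn G M pf := by
  choose pf h1 h2 h3 using fun v => exists_partner hM v
  exact ⟨pf, h1, h2, h3⟩

lemma PartnerFn.invol {pf : V → V} (h : PartnerFn G M pf) (v : V) : pf (pf v) = v := by
  have := h.mem v
  rw [Sym2.eq_swap] at this
  exact (h.uniq (pf v) v this).symm

lemma PartnerFn.injective {pf : V → V} (h : PartnerFn G M pf) : Function.Injective pf :=
  Function.LeftInverse.injective h.invol

lemma exists_other {pf : V → V} (h : PartnerFn G M pf)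
    (hnb : ∀ e ∈ M, ¬ G.IsBridge e) (v : V) :
    ∃ u, G.Adj v u ∧ u ≠ pf v := by
  have hbr := hnb _ (h.mem v)
  rw [SimpleGraph.isBridge_iff] at hbr
  push_neg at hbr
  have hreach := hbr
  have hvne : v ≠ pf v := (h.adj v).ne
  have key : ∀ z : V, (G \ SimpleGraph.fromEdgeSet {s(v, pf v)}).Reachable v z → v ≠ z →
      z = pf v → ∃ u, G.Adj v u ∧ u ≠ pf v := by
    intro z hreach hne hzpf
    obtain ⟨p⟩ := hreach
    clear hzpf
    cases p with
    | nil => exact absurd rfl hne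
    | @cons _ u _ hadj p =>
      rw [SimpleGraph.sdiff_adj, SimpleGraph.fromEdgeSet_adj] at hadj
      obtain ⟨hGadj, hne2⟩ := hadj
      refine ⟨u, hGadj, fun hu => hne2 ⟨?_, hGadj.ne⟩⟩
      rw [hu]
      exact Set.mem_singleton _
  exact key (pf v) hreach hvne rfl
  
/-- From a unique perfect matching with no bridge in `M`, extract a blossom:
an odd cycle `c 0, …, c (n-1)` whose non-base vertices are matched along the
cycle, together with the matching edge `s(b, c 0)` leaving the base. -/
lemma exists_blossom [Fintype V] [Nonempty V] (hM : IsPerfectMatchingOf G M)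
    (huniq : ∀ M', IsPerfectMatchingOf G M' → M' = M)
    (hnb : ∀ e ∈ M, ¬ G.IsBridge e) :
    ∃ (n : ℕ) (c : ℕ → V) (b : V), Odd n ∧ 3 ≤ n ∧
      (∀ i < n, ∀ j < n, c i = c j → i = j) ∧ c n = c 0 ∧
      (∀ i < n, G.Adj (c i) (c (i + 1))) ∧
      (∀ i < n, (s(c i, c (i + 1)) ∈ M ↔ ¬ Even i)) ∧
      (∀ i < n, b ≠ c i) ∧ s(b, c 0) ∈ M := by
  classical
  obtain ⟨pf, hpf⟩ := exists_partnerFn hM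
  choose gg hgg1 hgg2 using exists_other hpf hnb
  set w : ℕ → V := fun n => Nat.rec (Classical.arbitrary V)
    (fun k x => if Even k then pf x else gg x) n with hwdef
  have hw0 : ∀ k, Even k → w (k + 1) = pf (w k) := by
    intro k hk; simp only [hwdef]; rw [if_pos hk]
  have hw1 : ∀ k, ¬ Even k → w (k + 1) = gg (w k) := by
    intro k hk; simp only [hwdef]; rw [if_neg hk]
  have hwadj : ∀ k, G.Adj (w k) (w (k + 1)) := by
    intro k
    by_cases hk : Even k
    · rw [hw0 k hk]; exact hpf.adj _
    · rw [hw1 k hk]; exact hgg1 _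
  have hwalt : ∀ k, (s(w k, w (k + 1)) ∈ M ↔ Even k) := by
    intro k
    by_cases hk : Even k
    · rw [hw0 k hk]; simp [hk, hpf.mem]
    · rw [hw1 k hk]
      simp only [hk, iff_false]
      intro hmem
      exact hgg2 _ (hpf.uniq _ _ hmem)
  have hwpf : ∀ k, Even k → pf (w (k + 1)) = w k := by
    intro k hk; rw [hw0 k hk, hpf.invol]
  -- first repetition
  have hex : ∃ k, ∃ j, j < k ∧ w j = w k := by
    obtain ⟨a, b, hab, hw⟩ := Finite.exists_ne_map_eq_of_infinite w
    rcases lt_or_gt_of_ne hab with h | h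
    · exact ⟨b, a, h, hw⟩
    · exact ⟨a, b, h, hw.symm⟩
  obtain ⟨k₀, hspec, hmin⟩ : ∃ k₀, (∃ j < k₀, w j = w k₀) ∧
      ∀ m < k₀, ¬∃ i < m, w i = w m :=
    ⟨Nat.find hex, Nat.find_spec hex, fun m h => Nat.find_min hex h⟩
  obtain ⟨j, hjk, hwj⟩ := hspec
  have winj : ∀ a < k₀, ∀ b < k₀, w a = w b → a = b := by
    intro a ha b hb hab
    by_contra hne
    rcases lt_or_gt_of_ne hne with h | h
    · exact hmin b hb ⟨a, h, hab⟩
    · exact hmin a ha ⟨b, h, hab.symm⟩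
  -- k₀ is even
  have hk₀even : Even k₀ := by
    by_contra hk₀odd
    obtain ⟨m, rfl⟩ : ∃ m, k₀ = m + 1 := ⟨k₀ - 1, by
      rcases Nat.eq_zero_or_pos k₀ with rfl | h
      · omega
      · omega⟩
    have hmeven : Even m := by
      rcases Nat.even_or_odd m with h | h
      · exact h
      · exact absurd (by simpa using h.add_one) hk₀odd
    have hwk : w (m + 1) = pf (w m) := hw0 m hmeven
    by_cases hjev : Even j
    · -- j even
      have hj1 : w (j + 1) = pf (w j) := hw0 j hjev
      by_cases hjm : j = m
      · subst hjm
        rw [hwk] at hwj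
        exact (hpf.adj (w j)).ne hwj
      · have hjm' : j < m := by omega
        have : w (j + 1) = w m := by
          rw [hj1, hwj, hwk, hpf.invol]
        have h2 := winj (j + 1) (by omega) m (by omega) this
        -- j + 1 = m gives parity contradiction
        rw [Nat.even_iff] at hjev hmeven
        omega
    · -- j odd
      have hjpos : j ≠ 0 := by rintro rfl; exact hjev Even.zero
      obtain ⟨l, rfl⟩ : ∃ l, j = l + 1 := ⟨j - 1, by omega⟩
      have hlev : Even l := by
        rcases Nat.even_or_odd l with h | h
        · exact h
        · exact absurd (by simpa using h.add_one) hjev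
      have hl1 : w (l + 1) = pf (w l) := hw0 l hlev
      rw [hl1, hwk] at hwj
      have : w l = w m := hpf.injective hwj
      have := winj l (by omega) m (by omega) this
      omega
  by_cases hjev : Even j
  · -- alternating cycle: contradiction
    exfalso
    set m' := k₀ - j with hm'
    have hm'e : Even m' := by
      rw [Nat.even_iff] at hjev hk₀even ⊢; omega
    have hm'3 : 3 ≤ m' := by
      rcases Nat.lt_or_ge m' 3 with h | h
      · exfalso
        have hm'2 : m' = 2 := by
          -- m' even, 0 < m' < 3
          have : m' ≠ 0 := by omega
          rw [Nat.even_iff] at hm'e; omega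
        -- w (j+2) = w j impossible
        have hk2 : k₀ = j + 2 := by omega
        have h1 : w (j + 1) = pf (w j) := hw0 j hjev
        have h2 : w (j + 2) = gg (w (j + 1)) := hw1 (j + 1) (by simp [Nat.even_add_one, hjev])
        have h3 : pf (w (j + 1)) = w j := hwpf j hjev
        rw [hk2] at hwj
        rw [h2, ← h3] at hwj
        exact hgg2 _ hwj.symm
      · exact h
    exact no_alt_cycle hM huniq m' hm'e hm'3 (fun i => w (j + i))
      (fun a ha b hb hab => by
        have := winj (j + a) (by omega) (j + b) (by omega) hab; omega)
      (by show w (j + m') = w (j + 0); rw [show j + m' = k₀ by omega]; simpa using hwj.symm)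
      (fun i hi => by
        show G.Adj (w (j + i)) (w (j + (i + 1)))
        rw [show j + (i + 1) = (j + i) + 1 by omega]; exact hwadj _)
      (fun i hi => by
        show s(w (j + i), w (j + (i + 1))) ∈ M ↔ Even i
        rw [show j + (i + 1) = (j + i) + 1 by omega]
        rw [hwalt (j + i), Nat.even_iff, Nat.even_iff]
        rw [Nat.even_iff] at hjev
        omega)
  · -- blossom
    have hj1 : 1 ≤ j := by
      rcases Nat.eq_zero_or_pos j with rfl | h
      · simp at hjev
      · omega
    refine ⟨k₀ - j, fun i => w (j + i), w (j - 1), ?_, ?_, ?_, ?_, ?_, ?_, ?_, ?_⟩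
    · rw [Nat.odd_iff]; rw [Nat.even_iff] at hjev hk₀even; omega
    · -- 3 ≤ n : n odd, n ≠ 1
      have hn1 : k₀ - j ≠ 1 := by
        intro h
        have h2 : w (j + 1) = w j := by
          rw [show j + 1 = k₀ by omega]; exact hwj.symm
        exact (hwadj j).ne h2.symm
      rw [Nat.even_iff] at hjev hk₀even; omega
    · intro a ha b hb hab
      have := winj (j + a) (by omega) (j + b) (by omega) hab; omega
    · show w (j + (k₀ - j)) = w (j + 0)
      rw [show j + (k₀ - j) = k₀ by omega]; simpa using hwj.symm
    · intro i hi
      show G.Adj (w (j + i)) (w (j + (i + 1)))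
      rw [show j + (i + 1) = (j + i) + 1 by omega]; exact hwadj _
    · intro i hi
      show s(w (j + i), w (j + (i + 1))) ∈ M ↔ ¬ Even i
      rw [show j + (i + 1) = (j + i) + 1 by omega, hwalt (j + i), Nat.even_iff, Nat.even_iff]
      rw [Nat.even_iff] at hjev
      omega
    · intro i hi h
      have := winj (j - 1) (by omega) (j + i) (by omega) h
      omega
    · have : s(w (j - 1), w ((j - 1) + 1)) ∈ M := by
        rw [hwalt (j - 1)]
        rw [Nat.even_iff] at hjev ⊢; omega
      rwa [show j - 1 + 1 = j by omega] at this

end Basic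

section Blossoms
variable {V : Type*} {G : SimpleGraph V} {M : Set (Sym2 V)}

lemma zmod_succ (n : ℕ) [NeZero n] (hn : 2 ≤ n) (i : ZMod n) :
    ((i + 1).val = i.val + 1 ∧ i.val + 1 < n) ∨ (i.val = n - 1 ∧ (i + 1).val = 0) := by
  haveI : Fact (1 < n) := ⟨by omega⟩
  have h1 : (i + 1).val = (i.val + 1) % n := by
    rw [ZMod.val_add, ZMod.val_one]
  have h2 := ZMod.val_lt i
  rcases lt_or_ge (i.val + 1) n with h | h
  · left; exact ⟨by rw [h1, Nat.mod_eq_of_lt h], h⟩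
  · right
    have h3 : i.val + 1 = n := by omega
    exact ⟨by omega, by rw [h1, h3, Nat.mod_self]⟩

/-- Blossom data: an odd cycle `c` whose non-base vertices are matched along the
cycle and whose base `c 0` is matched to the external vertex `b`. -/
structure Blossom (G : SimpleGraph V) (M : Set (Sym2 V)) (n : ℕ) (c : ZMod n → V) (b : V) :
    Prop where
  hodd : Odd n
  h3 : 3 ≤ n
  inj : Function.Injective c
  adj : ∀ i, G.Adj (c i) (c (i + 1))
  alt : ∀ i : ZMod n, (s(c i, c (i + 1)) ∈ M ↔ ¬ Even i.val)
  bne : ∀ i, b ≠ c i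
  bM : s(b, c 0) ∈ M

/-- Convert ℕ-indexed blossom data into `Blossom`. -/
lemma blossom_of_nat (n : ℕ) (d : ℕ → V) (b : V) (hodd : Odd n) (h3 : 3 ≤ n)
    (hinj : ∀ i < n, ∀ j < n, d i = d j → i = j) (hwrap : d n = d 0)
    (hadj : ∀ i < n, G.Adj (d i) (d (i + 1)))
    (halt : ∀ i < n, (s(d i, d (i + 1)) ∈ M ↔ ¬ Even i))
    (hbne : ∀ i < n, b ≠ d i) (hbM : s(b, d 0) ∈ M) :
    haveI : NeZero n := ⟨by omega⟩
    Blossom G M n (fun z => d z.val) b := by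
  haveI : NeZero n := ⟨by omega⟩
  refine ⟨hodd, h3, ?_, ?_, ?_, ?_, ?_⟩
  · intro i j hij
    have := hinj i.val (ZMod.val_lt i) j.val (ZMod.val_lt j) hij
    exact ZMod.val_injective n this
  · intro i
    rcases zmod_succ n (by omega) i with ⟨h1, h2⟩ | ⟨h1, h2⟩
    · show G.Adj (d i.val) (d (i + 1).val)
      rw [h1]; exact hadj _ (by omega)
    · show G.Adj (d i.val) (d (i + 1).val)
      rw [h1, h2]
      have := hadj (n - 1) (by omega)
      rwa [show n - 1 + 1 = n by omega, hwrap] at this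
  · intro i
    rcases zmod_succ n (by omega) i with ⟨h1, h2⟩ | ⟨h1, h2⟩
    · show s(d i.val, d (i + 1).val) ∈ M ↔ _
      rw [h1]; exact halt _ (by omega)
    · show s(d i.val, d (i + 1).val) ∈ M ↔ _
      rw [h1, h2]
      have := halt (n - 1) (by omega)
      rwa [show n - 1 + 1 = n by omega, hwrap] at this
  · intro i; exact hbne i.val (ZMod.val_lt i)
  · show s(b, d (0 : ZMod n).val) ∈ M
    rwa [ZMod.val_zero]

section BlossomFacts
variable {n : ℕ} [NeZero n] {c : ZMod n → V} {b : V} {pf : V → V}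

lemma Blossom.val_pred (B : Blossom G M n c b) {i : ZMod n} (hi : i ≠ 0) :
    (i - 1).val = i.val - 1 ∧ 1 ≤ i.val := by
  have h0 : i.val ≠ 0 := fun h => hi ((ZMod.val_eq_zero i).mp h)
  rcases zmod_succ n (by have := B.h3; omega) (i - 1) with ⟨h1, h2⟩ | ⟨h1, h2⟩
  · rw [sub_add_cancel] at h1; omega
  · rw [sub_add_cancel] at h2; omega
  
lemma Blossom.pf_base (B : Blossom G M n c b) (hpf : PartnerFn G M pf) : pf (c 0) = b := by
  have := B.bM
  rw [Sym2.eq_swap] at this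
  exact (hpf.uniq (c 0) b this).symm

/-- The partner of an interior cycle vertex is the cycle-neighbour prescribed by parity. -/
lemma Blossom.pf_int (B : Blossom G M n c b) (hpf : PartnerFn G M pf) {i : ZMod n}
    (hi : i ≠ 0) : ∃ j : ZMod n, j ≠ 0 ∧ pf (c i) = c j := by
  have hval := B.val_pred hi
  have hn3 := B.h3
  have hnodd := B.hodd
  have hvlt := ZMod.val_lt i
  rw [Nat.odd_iff] at hnodd
  by_cases hpar : Even i.val
  · -- partner is c (i - 1)
    refine ⟨i - 1, ?_, ?_⟩
    · intro h
      have : i = 1 := by rwa [sub_eq_zero] at h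
      subst this
      have : (1 : ZMod n).val = 1 := ZMod.val_one'' (by omega)
      rw [this] at hpar
      simp at hpar
    · have halt := B.alt (i - 1)
      rw [sub_add_cancel] at halt
      have hmem : s(c (i - 1), c i) ∈ M := by
        rw [halt, hval.1]
        rw [Nat.even_iff] at hpar ⊢
        -- i.val even, i.val ≥ 1, so i.val - 1 odd
        omega
      rw [Sym2.eq_swap] at hmem
      exact (hpf.uniq (c i) (c (i - 1)) hmem).symm
  · -- partner is c (i + 1)
    refine ⟨i + 1, ?_, ?_⟩
    · intro h
      have h2 : (i + 1).val = 0 := (ZMod.val_eq_zero _).mpr h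
      rcases zmod_succ n (by omega) i with ⟨h3, h4⟩ | ⟨h3, h4⟩
      · omega
      · -- i.val = n - 1 is even since n odd; contradiction with hpar
        rw [Nat.even_iff] at hpar; omega
    · have hmem : s(c i, c (i + 1)) ∈ M := (B.alt i).mpr hpar
      exact (hpf.uniq (c i) (c (i + 1)) hmem).symm

/-- `b` is not adjacent to any interior vertex of the blossom (else there would be
an alternating cycle). -/
lemma Blossom.b_not_adj (B : Blossom G M n c b) (hpf : PartnerFn G M pf)
    (hM : IsPerfectMatchingOf G M)
    (huniq : ∀ M', IsPerfectMatchingOf G M' → M' = M)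
    {i : ZMod n} (hi : i ≠ 0) : ¬ G.Adj b (c i) := by
  intro hadj
  have hn3 := B.h3
  have hnodd := Nat.odd_iff.mp B.hodd
  have hr1 : 1 ≤ i.val := (B.val_pred hi).2
  have hrlt : i.val < n := ZMod.val_lt i
  have hb0 : G.Adj b (c 0) := (SimpleGraph.mem_edgeSet G).mp (hM.1 B.bM)
  have hcast : ∀ a : ℕ, a < n → ((a : ZMod n) : ZMod n).val = a := fun a ha =>
    ZMod.val_cast_of_lt ha
  have hicast : ((i.val : ℕ) : ZMod n) = i := by
    simp [ZMod.natCast_val, ZMod.cast_id]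
  -- s(c i, b) ∉ M
  have hcib : s(c i, b) ∉ M := by
    intro hmem
    have := hpf.uniq (c i) b hmem  -- b = pf (c i)
    obtain ⟨j, hj0, hpfj⟩ := B.pf_int hpf hi
    rw [hpfj] at this
    exact B.bne j this
  set r := i.val with hrdef
  by_cases hpar : Even r
  · -- forward cycle b, c 0, c 1, ..., c r, b of length r + 2
    apply no_alt_cycle hM huniq (r + 2) (by rw [Nat.even_iff] at hpar ⊢; omega) (by omega)
      (fun t => if t = 0 then b else if t ≤ r + 1 then c ((t - 1 : ℕ) : ZMod n) else b)
    · -- injectivity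
      intro a ha b' hb' hab
      by_cases ha0 : a = 0 <;> by_cases hb0' : b' = 0
      · omega
      · rw [if_pos ha0, if_neg hb0', if_pos (by omega)] at hab
        exact absurd hab (B.bne _)
      · rw [if_neg ha0, if_pos hb0', if_pos (by omega)] at hab
        exact absurd hab.symm (B.bne _)
      · rw [if_neg ha0, if_neg hb0', if_pos (by omega), if_pos (by omega)] at hab
        have := B.inj hab
        have h1 := hcast (a - 1) (by omega)
        have h2 := hcast (b' - 1) (by omega)
        rw [this] at h1
        rw [h2] at h1
        omega
    · -- wrap
      rw [if_neg (by omega : ¬ (r + 2 = 0)), if_neg (by omega : ¬ (r + 2 ≤ r + 1)),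
        if_pos rfl]
    · -- adjacency
      intro t ht
      rcases Nat.eq_zero_or_pos t with rfl | htpos
      · rw [if_pos rfl, if_neg (by omega : ¬ (0 + 1 = 0)), if_pos (by omega : 0 + 1 ≤ r + 1)]
        have h9 : ((0 + 1 - 1 : ℕ) : ZMod n) = 0 := by norm_num
        rw [h9]
        exact hb0
      · rw [if_neg (by omega), if_pos (by omega)]
        by_cases hlast : t = r + 1
        · subst hlast
          rw [if_neg (by omega), if_neg (by omega)]
          have : ((r + 1 - 1 : ℕ) : ZMod n) = i := by
            rw [show r + 1 - 1 = r from rfl, hrdef, hicast]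
          rw [this]
          exact hadj.symm
        · rw [if_neg (by omega), if_pos (by omega)]
          have heq : ((t + 1 - 1 : ℕ) : ZMod n) = ((t - 1 : ℕ) : ZMod n) + 1 := by
            rw [show t + 1 - 1 = t from rfl, Nat.cast_sub (by omega : 1 ≤ t)]
            push_cast
            ring
          rw [heq]
          exact B.adj _
    · -- alternation
      intro t ht
      rcases Nat.eq_zero_or_pos t with rfl | htpos
      · rw [if_pos rfl, if_neg (by omega : ¬ (0 + 1 = 0)), if_pos (by omega : 0 + 1 ≤ r + 1)]
        have h9 : ((0 + 1 - 1 : ℕ) : ZMod n) = 0 := by norm_num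
        rw [h9]
        simpa using B.bM
      · rw [if_neg (by omega), if_pos (by omega)]
        by_cases hlast : t = r + 1
        · subst hlast
          rw [if_neg (by omega), if_neg (by omega)]
          have : ((r + 1 - 1 : ℕ) : ZMod n) = i := by
            rw [show r + 1 - 1 = r from rfl, hrdef, hicast]
          rw [this]
          constructor
          · intro h; exact absurd h hcib
          · intro h; rw [Nat.even_iff] at h hpar; omega
        · rw [if_neg (by omega), if_pos (by omega)]
          have heq : ((t + 1 - 1 : ℕ) : ZMod n) = ((t - 1 : ℕ) : ZMod n) + 1 := by
            rw [show t + 1 - 1 = t from rfl, Nat.cast_sub (by omega : 1 ≤ t)]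
            push_cast
            ring
          rw [heq, B.alt _, hcast (t - 1) (by omega)]
          rw [Nat.even_iff, Nat.even_iff]
          omega
  · -- backward cycle b, c 0, c (n-1), ..., c i, b of length n - r + 2
    have hro : r % 2 = 1 := Nat.not_even_iff.mp hpar
    have hvnat : ∀ a : ℕ, ((a : ZMod n)).val = a % n := fun a => ZMod.val_natCast n a
    have hmodeq : ∀ a a' : ℕ, 1 ≤ a → a ≤ n → 1 ≤ a' → a' ≤ n → a % n = a' % n → a = a' := by
      intro a a' h1 h2 h3 h4 h5
      rcases eq_or_lt_of_le h2 with rfl | h2'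
      · rcases eq_or_lt_of_le h4 with rfl | h4'
        · rfl
        · rw [Nat.mod_self, Nat.mod_eq_of_lt h4'] at h5; omega
      · rcases eq_or_lt_of_le h4 with rfl | h4'
        · rw [Nat.mod_self, Nat.mod_eq_of_lt h2'] at h5; omega
        · rw [Nat.mod_eq_of_lt h2', Nat.mod_eq_of_lt h4'] at h5; omega
    have hlastidx : ((1 : ZMod n) - ((n - r + 1 : ℕ) : ZMod n)) = i := by
      rw [Nat.cast_add, Nat.cast_sub (by omega : r ≤ n), ZMod.natCast_self]
      push_cast
      rw [← hicast]
      ring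
    have hmid : ∀ t : ℕ, 1 ≤ t → t ≤ n - r →
        ((1 : ZMod n) - ((t + 1 : ℕ) : ZMod n)) + 1 = 1 - (t : ZMod n) := by
      intro t h1 h2
      push_cast
      ring
    have hnegval : ∀ t : ℕ, 1 ≤ t → t ≤ n - 1 → ((1 : ZMod n) - ((t + 1 : ℕ) : ZMod n)).val
        = n - t := by
      intro t h1 h2
      have hrw : (1 : ZMod n) - ((t + 1 : ℕ) : ZMod n) = ((n - t : ℕ) : ZMod n) := by
        rw [Nat.cast_sub (by omega : t ≤ n), ZMod.natCast_self]
        push_cast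
        ring
      rw [hrw, hcast (n - t) (by omega)]
    apply no_alt_cycle hM huniq (n - r + 2) (by rw [Nat.even_iff]; omega) (by omega)
      (fun t => if t = 0 then b else if t ≤ n - r + 1 then c (1 - (t : ZMod n)) else b)
    · -- injectivity
      intro a ha b' hb' hab
      by_cases ha0 : a = 0 <;> by_cases hb0' : b' = 0
      · omega
      · rw [if_pos ha0, if_neg hb0', if_pos (by omega)] at hab
        exact absurd hab (B.bne _)
      · rw [if_neg ha0, if_pos hb0', if_pos (by omega)] at hab
        exact absurd hab.symm (B.bne _)
      · rw [if_neg ha0, if_neg hb0', if_pos (by omega), if_pos (by omega)] at hab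
        have h5 := sub_right_inj.mp (B.inj hab)
        have h6 : a % n = b' % n := by
          rw [← hvnat a, ← hvnat b', h5]
        exact hmodeq a b' (by omega) (by omega) (by omega) (by omega) h6
    · -- wrap
      rw [if_neg (by omega : ¬ (n - r + 2 = 0)), if_neg (by omega : ¬ (n - r + 2 ≤ n - r + 1)),
        if_pos rfl]
    · -- adjacency
      intro t ht
      rcases Nat.eq_zero_or_pos t with rfl | htpos
      · rw [if_pos rfl, if_neg (by omega : ¬ (0 + 1 = 0)), if_pos (by omega)]
        have : (1 : ZMod n) - ((0 + 1 : ℕ) : ZMod n) = 0 := by push_cast; ring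
        rw [this]
        exact hb0
      · rw [if_neg (by omega), if_pos (by omega)]
        by_cases hlast : t = n - r + 1
        · subst hlast
          rw [if_neg (by omega), if_neg (by omega), hlastidx]
          exact hadj.symm
        · rw [if_neg (by omega), if_pos (by omega)]
          have := (B.adj ((1 : ZMod n) - ((t + 1 : ℕ) : ZMod n))).symm
          rw [hmid t (by omega) (by omega)] at this
          exact this
    · -- alternation
      intro t ht
      rcases Nat.eq_zero_or_pos t with rfl | htpos
      · rw [if_pos rfl, if_neg (by omega : ¬ (0 + 1 = 0)), if_pos (by omega)]
        have : (1 : ZMod n) - ((0 + 1 : ℕ) : ZMod n) = 0 := by push_cast; ring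
        rw [this]
        simpa using B.bM
      · rw [if_neg (by omega), if_pos (by omega)]
        by_cases hlast : t = n - r + 1
        · subst hlast
          rw [if_neg (by omega), if_neg (by omega), hlastidx]
          constructor
          · intro h; exact absurd h hcib
          · intro h; rw [Nat.even_iff] at h; omega
        · rw [if_neg (by omega), if_pos (by omega)]
          have halt := B.alt ((1 : ZMod n) - ((t + 1 : ℕ) : ZMod n))
          rw [hmid t (by omega) (by omega)] at halt
          rw [Sym2.eq_swap] at halt
          rw [halt, hnegval t (by omega) (by omega), Nat.even_iff, Nat.even_iff]
          omega

end BlossomFacts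
end Blossoms

section Contraction
variable {V : Type u} [Fintype V] {G : SimpleGraph V} {M : Set (Sym2 V)}
variable {n : ℕ} [NeZero n] {c : ZMod n → V} {b : V}

set_option maxHeartbeats 1000000 in
/-- The main contraction step: a blossom together with the induction hypothesis
for smaller vertex types yields a contradiction (assuming no edge of `M` is a bridge). -/
lemma Blossom.no_bridge_false (B : Blossom G M n c b)
    (hM : IsPerfectMatchingOf G M)
    (huniq : ∀ M', IsPerfectMatchingOf G M' → M' = M)
    (hnb : ∀ e ∈ M, ¬ G.IsBridge e)
    (IH : ∀ (W : Type u) [Fintype W] [Nonempty W] (H : SimpleGraph W) (N : Set (Sym2 W)),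
      Fintype.card W < Fintype.card V → IsPerfectMatchingOf H N →
      (∀ N', IsPerfectMatchingOf H N' → N' = N) → ∃ e ∈ N, H.IsBridge e) : False := by
  classical
  obtain ⟨pf, hpf⟩ := exists_partnerFn hM
  have hn3 := B.h3
  have hnodd := Nat.odd_iff.mp B.hodd
  haveI : Fact (1 < n) := ⟨by omega⟩
  have hcast : ∀ a : ℕ, a < n → ((a : ZMod n) : ZMod n).val = a := fun a ha =>
    ZMod.val_cast_of_lt ha
  set I : Set V := {v | ∃ i : ZMod n, i ≠ 0 ∧ c i = v} with hIdef
  have hc0I : c 0 ∉ I := by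
    rintro ⟨i, hi, hci⟩; exact hi (B.inj hci)
  have hbI : b ∉ I := by
    rintro ⟨i, hi, hci⟩; exact B.bne i hci.symm
  have hmemI : ∀ i : ZMod n, i ≠ 0 → c i ∈ I := fun i hi => ⟨i, hi, rfl⟩
  have hrangeI : ∀ v, v ∉ I → v ≠ c 0 → ∀ i, v ≠ c i := by
    intro v hv h0 i hvi
    rcases eq_or_ne i 0 with rfl | hi
    · exact h0 hvi
    · exact hv (hvi ▸ hmemI i hi)
  have hIpf : ∀ v, v ∉ I → pf v ∉ I := by
    rintro v hv ⟨j, hj, hcj⟩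
    obtain ⟨j', hj', hpfj'⟩ := B.pf_int hpf hj
    have hv2 : v = c j' := by rw [← hpf.invol v, ← hcj, hpfj']
    exact hv (hv2 ▸ hmemI j' hj')
  haveI : DecidablePred (· ∉ I) := Classical.decPred _
  set W := {v : V // v ∉ I} with hW
  set c0' : W := ⟨c 0, hc0I⟩ with hc0'
  haveI : Nonempty W := ⟨c0'⟩
  have hcard : Fintype.card W < Fintype.card V := by
    apply Fintype.card_subtype_lt (x := c 1)
    exact not_not_intro (hmemI 1 one_ne_zero)
  set G' : SimpleGraph W := {
    Adj := fun u v => u.1 ≠ v.1 ∧ (G.Adj u.1 v.1 ∨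
      (u.1 = c 0 ∧ ∃ i : ZMod n, i ≠ 0 ∧ G.Adj (c i) v.1) ∨
      (v.1 = c 0 ∧ ∃ i : ZMod n, i ≠ 0 ∧ G.Adj u.1 (c i)))
    symm := ⟨by
      rintro u v ⟨hne, h⟩
      refine ⟨Ne.symm hne, ?_⟩
      rcases h with h | ⟨h1, i, hi, h2⟩ | ⟨h1, i, hi, h2⟩
      · exact Or.inl h.symm
      · exact Or.inr (Or.inr ⟨h1, i, hi, h2.symm⟩)
      · exact Or.inr (Or.inl ⟨h1, i, hi, h2.symm⟩)⟩
    loopless := ⟨fun u h => h.1 rfl⟩ } with hG'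
  have hG'adj : ∀ u v : W, G'.Adj u v ↔ (u.1 ≠ v.1 ∧ (G.Adj u.1 v.1 ∨
      (u.1 = c 0 ∧ ∃ i : ZMod n, i ≠ 0 ∧ G.Adj (c i) v.1) ∨
      (v.1 = c 0 ∧ ∃ i : ZMod n, i ≠ 0 ∧ G.Adj u.1 (c i)))) := fun u v => Iff.rfl
  set M' : Set (Sym2 W) := {e | Sym2.map Subtype.val e ∈ M} with hM'def
  have hmap_pair : ∀ x y : W, Sym2.map (Subtype.val) s(x, y) = s(x.1, y.1) :=
    fun x y => Sym2.map_pair_eq _ _ _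
  -- M' is a perfect matching of G'
  have hM'pm : IsPerfectMatchingOf G' M' := by
    constructor
    · intro e
      induction e with
      | _ x y =>
        intro he
        have hm : s(x.1, y.1) ∈ M := by rwa [hM'def, Set.mem_setOf_eq, hmap_pair] at he
        have hadjG : G.Adj x.1 y.1 := (SimpleGraph.mem_edgeSet G).mp (hM.1 hm)
        show G'.Adj x y
        exact ⟨hadjG.ne, Or.inl hadjG⟩
    · intro v
      have hpfv : pf v.1 ∉ I := hIpf v.1 v.2
      refine ⟨s(v, ⟨pf v.1, hpfv⟩), ⟨?_, Sym2.mem_mk_left _ _⟩, ?_⟩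
      · show Sym2.map Subtype.val _ ∈ M
        rw [hmap_pair]
        exact hpf.mem v.1
      · intro e
        induction e with
        | _ x y =>
          rintro ⟨heM', hve⟩
          have hm : s(x.1, y.1) ∈ M := by rwa [hM'def, Set.mem_setOf_eq, hmap_pair] at heM'
          rw [Sym2.mem_iff] at hve
          rcases hve with rfl | rfl
          · have : y.1 = pf v.1 := hpf.uniq v.1 y.1 hm
            have : y = ⟨pf v.1, hpfv⟩ := Subtype.ext this
            rw [this]
          · have hm2 : s(v.1, x.1) ∈ M := by rwa [Sym2.eq_swap] at hm
            have : x.1 = pf v.1 := hpf.uniq v.1 x.1 hm2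
            have hx : x = ⟨pf v.1, hpfv⟩ := Subtype.ext this
            rw [hx, Sym2.eq_swap]
  -- M' is the unique perfect matching of G'
  have hM'uniq : ∀ N', IsPerfectMatchingOf G' N' → N' = M' := by
    intro N' hN'
    obtain ⟨w', hw'adj, hw'M, hw'uniq⟩ := exists_partner hN' c0'
    obtain ⟨hw'ne, hw'or⟩ := (hG'adj c0' w').mp hw'adj
    have hw'c0 : w'.1 ≠ c 0 := fun h => hw'ne (h.symm)
    obtain ⟨i₀, hi₀⟩ : ∃ i : ZMod n, G.Adj (c i) w'.1 := by
      rcases hw'or with h | ⟨h1, i, hi, h2⟩ | ⟨h1, h2⟩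
      · exact ⟨0, h⟩
      · exact ⟨i, h2⟩
      · exact absurd h1 hw'c0
    have hicast : ∀ ρ : ZMod n, ((ρ.val : ℕ) : ZMod n) = ρ := by
      intro ρ; simp [ZMod.natCast_val, ZMod.cast_id]
    set CM : Set (Sym2 V) := {e | ∃ t : ℕ, 2 * t + 2 ≤ n - 1 ∧
      e = s(c (i₀ + ((2 * t + 1 : ℕ) : ZMod n)), c (i₀ + ((2 * t + 2 : ℕ) : ZMod n)))}
      with hCMdef
    have hCMedge : ∀ e ∈ CM, e ∈ G.edgeSet := by
      rintro e ⟨t, ht, rfl⟩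
      have : (i₀ + ((2 * t + 2 : ℕ) : ZMod n)) = (i₀ + ((2 * t + 1 : ℕ) : ZMod n)) + 1 := by
        push_cast; ring
      rw [this]
      exact (SimpleGraph.mem_edgeSet G).mpr (B.adj _)
    have hCMvert : ∀ e ∈ CM, ∀ v ∈ e, ∃ ρ : ZMod n, ρ ≠ 0 ∧ v = c (i₀ + ρ) := by
      rintro e ⟨t, ht, rfl⟩ v hv
      rw [Sym2.mem_iff] at hv
      rcases hv with rfl | rfl
      · refine ⟨((2 * t + 1 : ℕ) : ZMod n), ?_, rfl⟩
        intro h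
        have := hcast (2 * t + 1) (by omega)
        rw [h, ZMod.val_zero] at this
        omega
      · refine ⟨((2 * t + 2 : ℕ) : ZMod n), ?_, rfl⟩
        intro h
        have := hcast (2 * t + 2) (by omega)
        rw [h, ZMod.val_zero] at this
        omega
    have hCMidx : ∀ (ρ : ZMod n), ρ ≠ 0 → ∀ e ∈ CM, c (i₀ + ρ) ∈ e →
        ∃ t : ℕ, 2 * t + 2 ≤ n - 1 ∧
          e = s(c (i₀ + ((2 * t + 1 : ℕ) : ZMod n)), c (i₀ + ((2 * t + 2 : ℕ) : ZMod n))) ∧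
          (ρ.val = 2 * t + 1 ∨ ρ.val = 2 * t + 2) := by
      rintro ρ hρ e ⟨t, ht, rfl⟩ hv
      refine ⟨t, ht, rfl, ?_⟩
      rw [Sym2.mem_iff] at hv
      rcases hv with hv | hv
      · left
        have := add_left_cancel (B.inj hv)
        rw [this]
        exact hcast _ (by omega)
      · right
        have := add_left_cancel (B.inj hv)
        rw [this]
        exact hcast _ (by omega)
    have hCMcover : ∀ ρ : ZMod n, ρ ≠ 0 → ∃ e ∈ CM, c (i₀ + ρ) ∈ e := by
      intro ρ hρ
      have hρv : ρ.val ≠ 0 := fun h => hρ ((ZMod.val_eq_zero ρ).mp h)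
      have hρlt : ρ.val < n := ZMod.val_lt ρ
      rcases Nat.even_or_odd ρ.val with hpar | hpar
      · -- even: second slot, t = (ρ.val - 2)/2
        rw [Nat.even_iff] at hpar
        refine ⟨_, ⟨(ρ.val - 2) / 2, by omega, rfl⟩, ?_⟩
        have h1 : 2 * ((ρ.val - 2) / 2) + 2 = ρ.val := by omega
        rw [h1, hicast ρ]
        exact Sym2.mem_mk_right _ _
      · rw [Nat.odd_iff] at hpar
        refine ⟨_, ⟨(ρ.val - 1) / 2, by omega, rfl⟩, ?_⟩
        have h1 : 2 * ((ρ.val - 1) / 2) + 1 = ρ.val := by omega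
        rw [h1, hicast ρ]
        exact Sym2.mem_mk_left _ _
    have hCMuniq : ∀ (ρ : ZMod n), ρ ≠ 0 → ∀ e₁ ∈ CM, ∀ e₂ ∈ CM,
        c (i₀ + ρ) ∈ e₁ → c (i₀ + ρ) ∈ e₂ → e₁ = e₂ := by
      intro ρ hρ e₁ he₁ e₂ he₂ hv₁ hv₂
      obtain ⟨t₁, ht₁, rfl, hr₁⟩ := hCMidx ρ hρ e₁ he₁ hv₁
      obtain ⟨t₂, ht₂, rfl, hr₂⟩ := hCMidx ρ hρ e₂ he₂ hv₂
      have : t₁ = t₂ := by omega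
      rw [this]
    -- the lifted matching on V
    set N : Set (Sym2 V) := (Sym2.map Subtype.val '' (N' \ {s(c0', w')})) ∪
      ({s(c i₀, w'.1)} ∪ CM) with hNdef
    have hw'notc : ∀ i : ZMod n, w'.1 ≠ c i := hrangeI w'.1 w'.2 hw'c0
    -- vertices of mapped edges avoid I, c 0, w'.1
    have himg_vert : ∀ e' ∈ N' \ ({s(c0', w')} : Set (Sym2 W)),
        ∀ u ∈ Sym2.map (Subtype.val : W → V) e', u ∉ I ∧ u ≠ c 0 ∧ u ≠ w'.1 := by
      rintro e' ⟨he', hne⟩ u hu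
      rw [Sym2.mem_map] at hu
      obtain ⟨a, ha, rfl⟩ := hu
      refine ⟨a.2, ?_, ?_⟩
      · intro h
        have ha' : a = c0' := Subtype.ext h
        obtain ⟨e₀, he₀, hu₀⟩ := hN'.2 a
        have h1 := hu₀ e' ⟨he', ha⟩
        have h2 := hu₀ s(c0', w') ⟨hw'M, by rw [ha']; exact Sym2.mem_mk_left _ _⟩
        exact hne (Set.mem_singleton_iff.mpr (h1.trans h2.symm))
      · intro h
        have ha' : a = w' := Subtype.ext h
        obtain ⟨e₀, he₀, hu₀⟩ := hN'.2 a
        have h1 := hu₀ e' ⟨he', ha⟩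
        have h2 := hu₀ s(c0', w') ⟨hw'M, by rw [ha']; exact Sym2.mem_mk_right _ _⟩
        exact hne (Set.mem_singleton_iff.mpr (h1.trans h2.symm))
    -- N is a perfect matching of G
    have hNpm : IsPerfectMatchingOf G N := by
      constructor
      · -- edges of N are edges of G
        have hN'G : ∀ e' ∈ N', e' ∉ ({s(c0', w')} : Set (Sym2 W)) →
            Sym2.map (Subtype.val : W → V) e' ∈ G.edgeSet := by
          intro e'
          induction e' with
          | _ x y =>
            intro he' hnotc
            have hne2 : s(x, y) ≠ s(c0', w') := fun h => hnotc (by rw [h]; rfl)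
            obtain ⟨hxy, hor⟩ := (hG'adj x y).mp (hN'.1 he')
            rw [hmap_pair]
            rcases hor with h | ⟨h1, _⟩ | ⟨h1, _⟩
            · exact (SimpleGraph.mem_edgeSet G).mpr h
            · exfalso
              have hx : x = c0' := Subtype.ext h1
              subst hx
              have := hw'uniq y he'
              exact hne2 (by rw [this])
            · exfalso
              have hy : y = c0' := Subtype.ext h1
              subst hy
              have hswap : s(c0', x) ∈ N' := by rwa [Sym2.eq_swap] at he'
              have := hw'uniq x hswap
              exact hne2 (by rw [this, Sym2.eq_swap])
        rintro e (⟨e', he', rfl⟩ | he | he)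
        · exact hN'G e' he'.1 he'.2
        · rw [Set.mem_singleton_iff] at he
          rw [he]
          exact (SimpleGraph.mem_edgeSet G).mpr hi₀
        · exact hCMedge e he
      · -- every vertex in exactly one edge
        intro v
        by_cases hvc : ∃ ρ : ZMod n, v = c (i₀ + ρ)
        · obtain ⟨ρ, rfl⟩ := hvc
          by_cases hρ : ρ = 0
          · subst hρ
            refine ⟨s(c i₀, w'.1), ⟨?_, ?_⟩, ?_⟩
            · exact Or.inr (Or.inl rfl)
            · rw [add_zero]; exact Sym2.mem_mk_left _ _
            rintro e ⟨(⟨e', he', rfl⟩ | he | he), hve⟩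
            · exfalso
              have := himg_vert e' he' _ hve
              rw [add_zero] at this
              rcases eq_or_ne i₀ 0 with rfl | hi₀0
              · exact this.2.1 rfl
              · exact this.1 (hmemI i₀ hi₀0)
            · rwa [Set.mem_singleton_iff] at he
            · exfalso
              obtain ⟨ρ', hρ', hv'⟩ := hCMvert e he _ hve
              rw [add_zero] at hv'
              have := B.inj hv'
              exact hρ' (by rwa [left_eq_add] at this)
          · obtain ⟨e₁, he₁, hv₁⟩ := hCMcover ρ hρ
            refine ⟨e₁, ⟨Or.inr (Or.inr he₁), hv₁⟩, ?_⟩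
            rintro e ⟨(⟨e', he', rfl⟩ | he | he), hve⟩
            · exfalso
              have := himg_vert e' he' _ hve
              rcases eq_or_ne (i₀ + ρ) 0 with h0 | h0
              · exact this.2.1 (by rw [h0])
              · exact this.1 (hmemI _ h0)
            · exfalso
              rw [Set.mem_singleton_iff] at he
              subst he
              rw [Sym2.mem_iff] at hve
              rcases hve with hv | hv
              · have := B.inj hv
                exact hρ (by rwa [add_eq_left] at this)
              · exact hw'notc _ hv.symm
            · exact hCMuniq ρ hρ e he e₁ he₁ hve hv₁
        · push_neg at hvc
          have hvI : v ∉ I := by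
            rintro ⟨i, hi, hci⟩
            exact hvc (i - i₀) (by rw [← hci, add_sub_cancel])
          have hvc0 : v ≠ c 0 := by
            intro h
            exact hvc (0 - i₀) (by rw [h, add_sub_cancel])
          by_cases hvw : v = w'.1
          · refine ⟨s(c i₀, w'.1), ⟨?_, ?_⟩, ?_⟩
            · exact Or.inr (Or.inl rfl)
            · rw [hvw]; exact Sym2.mem_mk_right _ _
            rintro e ⟨(⟨e', he', rfl⟩ | he | he), hve⟩
            · exact absurd hvw (himg_vert e' he' _ hve).2.2
            · rwa [Set.mem_singleton_iff] at he
            · exfalso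
              obtain ⟨ρ', hρ', hv'⟩ := hCMvert e he _ hve
              exact hvc ρ' hv'
          · set v' : W := ⟨v, hvI⟩ with hv'def
            obtain ⟨e₀, ⟨he₀N, hve₀⟩, hu₀⟩ := hN'.2 v'
            have he₀ne : e₀ ∉ ({s(c0', w')} : Set (Sym2 W)) := by
              rw [Set.mem_singleton_iff]
              rintro rfl
              rw [Sym2.mem_iff] at hve₀
              rcases hve₀ with h | h
              · exact hvc0 (congrArg Subtype.val h)
              · exact hvw (congrArg Subtype.val h)
            refine ⟨Sym2.map Subtype.val e₀, ⟨Or.inl ⟨e₀, ⟨he₀N, he₀ne⟩, rfl⟩, ?_⟩, ?_⟩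
            · rw [Sym2.mem_map]
              exact ⟨v', hve₀, rfl⟩
            · rintro e ⟨(⟨e', he', rfl⟩ | he | he), hve⟩
              · rw [Sym2.mem_map] at hve
                obtain ⟨a, ha, hav⟩ := hve
                have ha' : a = v' := Subtype.ext hav
                subst ha'
                rw [hu₀ e' ⟨he'.1, ha⟩]
              · exfalso
                rw [Set.mem_singleton_iff] at he
                subst he
                rw [Sym2.mem_iff] at hve
                rcases hve with h | h
                · exact hvc 0 (by rw [add_zero]; exact h)
                · exact hvw h
              · exfalso
                obtain ⟨ρ', hρ', hv'⟩ := hCMvert e he _ hve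
                exact hvc ρ' hv'
    have hNM : N = M := huniq N hNpm
    have hi₀M : s(c i₀, w'.1) ∈ M := by
      rw [← hNM]
      exact Or.inr (Or.inl rfl)
    have hw'pf : w'.1 = pf (c i₀) := hpf.uniq _ _ hi₀M
    have hi₀0 : i₀ = 0 := by
      by_contra h
      obtain ⟨j, hj, hpfj⟩ := B.pf_int hpf h
      exact hw'notc j (by rw [hw'pf, hpfj])
    have hw'b : w'.1 = b := by
      rw [hw'pf, hi₀0, B.pf_base hpf]
    -- N' = M'
    refine pm_eq_of_subset hN' hM'pm ?_
    intro e' he'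
    by_cases he'c : e' = s(c0', w')
    · subst he'c
      show Sym2.map Subtype.val _ ∈ M
      rw [hmap_pair, hw'b]
      show s(c 0, b) ∈ M
      rw [Sym2.eq_swap]
      exact B.bM
    · have : Sym2.map Subtype.val e' ∈ N := Or.inl ⟨e', ⟨he', he'c⟩, rfl⟩
      rw [hNM] at this
      exact this
  -- apply the induction hypothesis and transfer the bridge back
  obtain ⟨e', he'M', hbr'⟩ := IH W G' M' hcard hM'pm hM'uniq
  revert he'M' hbr'
  induction e' with
  | _ x y =>
    intro he'M' hbr'
    have hxyM : s(x.1, y.1) ∈ M := by rwa [hM'def, Set.mem_setOf_eq, hmap_pair] at he'M'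
    have hGadj : G.Adj x.1 y.1 := (SimpleGraph.mem_edgeSet G).mp (hM.1 hxyM)
    have hnbr := hnb _ hxyM
    rw [SimpleGraph.isBridge_iff] at hnbr
    push_neg at hnbr
    have hreach := hnbr
    rw [SimpleGraph.isBridge_iff] at hbr'
    have hnoreach := hbr'
    set π : V → W := fun v => if h : v ∈ I then c0' else ⟨v, h⟩ with hπdef
    have hπ : ∀ v (h : v ∉ I), π v = ⟨v, h⟩ := fun v h => dif_neg h
    have hπI : ∀ v, v ∈ I → π v = c0' := fun v h => dif_pos h
    have hπx : π x.1 = x := by rw [hπ x.1 x.2]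
    have hπy : π y.1 = y := by rw [hπ y.1 y.2]
    have hmapne : ∀ u v : V, (hu : u ∉ I) → (hv : v ∉ I) →
        s((⟨u, hu⟩ : W), (⟨v, hv⟩ : W)) = s(x, y) → s(u, v) = s(x.1, y.1) := by
      intro u v hu hv h
      have := congrArg (Sym2.map (Subtype.val : W → V)) h
      rwa [hmap_pair, hmap_pair] at this
    have hcross : ∀ u v, u ∈ I → (hv : v ∉ I) → v ≠ c 0 → G.Adj u v →
        s(u, v) ≠ s(x.1, y.1) → (G' \ fromEdgeSet {s(x, y)}).Adj (π u) (π v) := by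
      intro u v huI hvI hvc0 hadjuv hne
      obtain ⟨i, hi, rfl⟩ : ∃ i : ZMod n, i ≠ 0 ∧ c i = u := huI
      rw [SimpleGraph.sdiff_adj, SimpleGraph.fromEdgeSet_adj]
      rw [hπI _ (hmemI i hi), hπ v hvI]
      refine ⟨⟨fun h => hvc0 h.symm, Or.inr (Or.inl ⟨rfl, i, hi, hadjuv⟩)⟩, ?_⟩
      rintro ⟨hmem, -⟩
      rw [Set.mem_singleton_iff] at hmem
      have hmapeq : s(c 0, v) = s(x.1, y.1) := hmapne _ _ _ _ hmem
      have hm : s(c 0, v) ∈ M := by rw [hmapeq]; exact hxyM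
      have hvb : v = b := by rw [hpf.uniq _ _ hm, B.pf_base hpf]
      subst hvb
      exact B.b_not_adj hpf hM huniq hi hadjuv.symm
    have claim : ∀ u v, (G \ fromEdgeSet {s(x.1, y.1)}).Adj u v →
        (G' \ fromEdgeSet {s(x, y)}).Adj (π u) (π v) ∨ π u = π v := by
      intro u v huv
      rw [SimpleGraph.sdiff_adj, SimpleGraph.fromEdgeSet_adj] at huv
      obtain ⟨hadjuv, hne⟩ := huv
      have hne' : s(u, v) ≠ s(x.1, y.1) := by
        intro h
        exact hne ⟨by rw [h]; exact Set.mem_singleton _, hadjuv.ne⟩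
      by_cases huI : u ∈ I <;> by_cases hvI : v ∈ I
      · right; rw [hπI _ huI, hπI _ hvI]
      · by_cases hvc0 : v = c 0
        · right
          rw [hπI _ huI, hπ v hvI]
          exact Subtype.ext hvc0.symm
        · left; exact hcross u v huI hvI hvc0 hadjuv hne'
      · by_cases huc0 : u = c 0
        · right
          rw [hπI _ hvI, hπ u huI]
          exact (Subtype.ext huc0)
        · left
          have := hcross v u hvI huI huc0 hadjuv.symm (by rwa [Sym2.eq_swap])
          exact this.symm
      · left
        rw [SimpleGraph.sdiff_adj, SimpleGraph.fromEdgeSet_adj]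
        rw [hπ u huI, hπ v hvI]
        refine ⟨⟨hadjuv.ne, Or.inl hadjuv⟩, ?_⟩
        rintro ⟨hmem, -⟩
        rw [Set.mem_singleton_iff] at hmem
        exact hne' (hmapne _ _ _ _ hmem)
    have transfer : ∀ u v : V, (G \ fromEdgeSet {s(x.1, y.1)}).Walk u v →
        (G' \ fromEdgeSet {s(x, y)}).Reachable (π u) (π v) := by
      intro u v p
      induction p with
      | nil => exact Reachable.refl _
      | @cons a bb cc h p ih =>
        rcases claim _ _ h with h' | h'
        · exact (h'.reachable).trans ih
        · rw [h']; exact ih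
    obtain ⟨p⟩ := hreach
    have := transfer _ _ p
    rw [hπx, hπy] at this
    exact hnoreach this

end Contraction

theorem kotzig_aux : ∀ (k : ℕ) (V : Type u) [Fintype V] [Nonempty V] (G : SimpleGraph V)
    (M : Set (Sym2 V)), Fintype.card V ≤ k → IsPerfectMatchingOf G M →
    (∀ M', IsPerfectMatchingOf G M' → M' = M) → ∃ e ∈ M, G.IsBridge e := by
  intro k
  induction k with
  | zero =>
    intro V _ _ G M hcard hM huniq
    exact absurd hcard (by have := Fintype.card_pos (α := V); omega)
  | succ k ih =>
    intro V _ _ G M hcard hM huniq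
    by_contra hnb
    push_neg at hnb
    obtain ⟨n, d, b, hodd, h3, hinj, hwrap, hadj, halt, hbne, hbM⟩ :=
      exists_blossom hM huniq hnb
    haveI : NeZero n := ⟨by omega⟩
    have B := blossom_of_nat n d b hodd h3 hinj hwrap hadj halt hbne hbM
    exact B.no_bridge_false hM huniq hnb
      (fun W _ _ H N hlt hN hNu => ih W H N (by omega) hN hNu)

end Kotzig

/-- Kotzig's theorem: if a finite nonempty graph `G` admits a unique perfect matching `M`,
then `M` contains a bridge of `G`. -/
theorem stmt3 {V : Type*} [Fintype V] [Nonempty V] (G : SimpleGraph V)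
    (M : Set (Sym2 V)) (hM : IsPerfectMatchingOf G M)
    (huniq : ∀ M', IsPerfectMatchingOf G M' → M' = M) :
    ∃ e ∈ M, G.IsBridge e :=
  Kotzig.kotzig_aux (Fintype.card V) V G M le_rfl hM huniq
end

section
/- (Soundness of the join construction.) Let G and G' be finite graphs on disjoint vertex sets with unique perfect matchings M and M' respectively, let U ⊆ V(G) and U' ⊆ V(G'), and let x, x' be two fresh vertices. Let G'' be the graph with vertex set V(G) ∪ V(G') ∪ {x, x'} and edge set E(G) ∪ E(G') ∪ {(x,x')} ∪ { (u,x) : u ∈ U } ∪ { (u',x') : u' ∈ U' }. Then M ∪ M' ∪ {(x,x')} is the unique perfect matching of G''. -/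
/-- `E` is the edge set of a graph on the vertex set `s`: its edges are non-loops whose
endpoints all lie in `s`. -/
def IsGraphOn {V : Type*} (s : Set V) (E : Set (Sym2 V)) : Prop :=
  ∀ e ∈ E, ¬ e.IsDiag ∧ ∀ v ∈ e, v ∈ s

/-- `M` is a perfect matching of the graph with vertex set `s` and edge set `E`:
`M ⊆ E` and every vertex of `s` belongs to exactly one edge of `M`. -/
def IsPMOn {V : Type*} (s : Set V) (E M : Set (Sym2 V)) : Prop :=
  M ⊆ E ∧ ∀ v ∈ s, ∃! e, e ∈ M ∧ v ∈ e

lemma even_ncard_of_pm' {V : Type*} (t : Set V) (M : Set (Sym2 V))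
    (htfin : t.Finite)
    (hedge : ∀ e ∈ M, ¬ e.IsDiag ∧ ∀ v ∈ e, v ∈ t)
    (hcov : ∀ v ∈ t, ∃! e, e ∈ M ∧ v ∈ e) : Even t.ncard := by
  classical
  generalize hn : t.ncard = n
  induction n using Nat.strong_induction_on generalizing t M with
  | _ n ih =>
  rcases t.eq_empty_or_nonempty with rfl | ⟨v, hv⟩
  · simp only [Set.ncard_empty] at hn; exact hn ▸ Even.zero
  obtain ⟨e, ⟨heM, hve⟩, -⟩ := hcov v hv
  induction e using Sym2.ind with
  | _ a b =>
  have hab : a ≠ b := by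
    have := (hedge _ heM).1; simpa [Sym2.isDiag_iff_proj_eq] using this
  have hat : a ∈ t := (hedge _ heM).2 a (by simp)
  have hbt : b ∈ t := (hedge _ heM).2 b (by simp)
  have hsub : ({a, b} : Set V) ⊆ t := by
    rintro z (rfl | rfl) <;> assumption
  have hcard2 : ({a, b} : Set V).ncard = 2 := Set.ncard_pair hab
  have hle : 2 ≤ t.ncard := hcard2 ▸ Set.ncard_le_ncard hsub htfin
  have ht' : (t \ {a, b}).ncard = t.ncard - 2 := by
    rw [Set.ncard_diff hsub (Set.toFinite _), hcard2]
  have huniq : ∀ w ∈ t, ∀ f ∈ M, w ∈ f → ∀ g ∈ M, w ∈ g → f = g := by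
    intro w hw f hf hwf g hg hwg
    obtain ⟨e0, -, hu⟩ := hcov w hw
    rw [hu f ⟨hf, hwf⟩, hu g ⟨hg, hwg⟩]
  have heven : Even (t \ {a, b}).ncard := by
    refine ih _ (by omega) _ (M \ {s(a, b)}) htfin.diff ?_ ?_ rfl
    · rintro f ⟨hfM, hfne⟩
      refine ⟨(hedge _ hfM).1, fun w hw => ⟨(hedge _ hfM).2 w hw, ?_⟩⟩
      rintro (rfl | rfl)
      · exact hfne (huniq w hat f hfM hw _ heM (by simp))
      · exact hfne (huniq w hbt f hfM hw _ heM (by simp))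
    · rintro w ⟨hwt, hwab⟩
      obtain ⟨f, ⟨hfM, hwf⟩, hu⟩ := hcov w hwt
      have hfne : f ≠ s(a, b) := by
        rintro rfl
        rcases (Sym2.mem_iff).mp hwf with rfl | rfl
        · exact hwab (by simp)
        · exact hwab (by simp)
      exact ⟨f, ⟨⟨hfM, hfne⟩, hwf⟩, fun g hg => hu g ⟨hg.1.1, hg.2⟩⟩
  rw [ht', hn] at heven
  rw [hn] at hle
  obtain ⟨k, hk⟩ := heven
  exact ⟨k + 1, by omega⟩

/-- Soundness of the join construction: given two finite graphs `(s, E)` and `(s', E')`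
on disjoint vertex sets with unique perfect matchings `M` and `M'`, subsets `U ⊆ s` and
`U' ⊆ s'`, and two fresh vertices `x ≠ x'`, the graph with vertex set `s ∪ s' ∪ {x, x'}`
and edge set `E ∪ E' ∪ {s(x,x')} ∪ (U × {x}) ∪ (U' × {x'})` has
`M ∪ M' ∪ {s(x,x')}` as its unique perfect matching. -/
theorem stmt5 {V : Type*} [Fintype V] (s s' U U' : Set V) (E E' M M' : Set (Sym2 V))
    (x x' : V)
    (hE : IsGraphOn s E) (hE' : IsGraphOn s' E')
    (hdisj : Disjoint s s') (hU : U ⊆ s) (hU' : U' ⊆ s')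
    (hx : x ∉ s ∪ s') (hx' : x' ∉ s ∪ s') (hxx' : x ≠ x')
    (hM : IsPMOn s E M) (hMuniq : ∀ N, IsPMOn s E N → N = M)
    (hM' : IsPMOn s' E' M') (hM'uniq : ∀ N, IsPMOn s' E' N → N = M') :
    IsPMOn (s ∪ s' ∪ {x, x'})
        (E ∪ E' ∪ {s(x, x')} ∪ {e | ∃ u ∈ U, e = s(u, x)} ∪ {e | ∃ u ∈ U', e = s(u, x')})
        (M ∪ M' ∪ {s(x, x')}) ∧
      ∀ N, IsPMOn (s ∪ s' ∪ {x, x'})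
          (E ∪ E' ∪ {s(x, x')} ∪ {e | ∃ u ∈ U, e = s(u, x)} ∪ {e | ∃ u ∈ U', e = s(u, x')})
          N → N = M ∪ M' ∪ {s(x, x')} := by
  classical
  obtain ⟨hME, hMcov⟩ := hM
  obtain ⟨hM'E, hM'cov⟩ := hM'
  have hxs : x ∉ s := fun h => hx (Or.inl h)
  have hxs' : x ∉ s' := fun h => hx (Or.inr h)
  have hx's : x' ∉ s := fun h => hx' (Or.inl h)
  have hx's' : x' ∉ s' := fun h => hx' (Or.inr h)
  have hEmem : ∀ e ∈ E, ∀ v ∈ e, v ∈ s := fun e he => (hE e he).2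
  have hE'mem : ∀ e ∈ E', ∀ v ∈ e, v ∈ s' := fun e he => (hE' e he).2
  have hss' : ∀ v ∈ s, v ∉ s' := fun v hv => Set.disjoint_left.1 hdisj hv
  constructor
  · constructor
    · rintro e ((he | he) | he)
      · exact Or.inl (Or.inl (Or.inl (Or.inl (hME he))))
      · exact Or.inl (Or.inl (Or.inl (Or.inr (hM'E he))))
      · exact Or.inl (Or.inl (Or.inr he))
    · rintro v ((hv | hv) | hv)
      · obtain ⟨e, ⟨heM, hve⟩, hu⟩ := hMcov v hv
        refine ⟨e, ⟨Or.inl (Or.inl heM), hve⟩, ?_⟩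
        rintro f ⟨(hf | hf) | hf, hvf⟩
        · exact hu f ⟨hf, hvf⟩
        · exact absurd (hE'mem _ (hM'E hf) v hvf) (hss' v hv)
        · rw [Set.mem_singleton_iff] at hf
          subst hf
          rcases Sym2.mem_iff.mp hvf with rfl | rfl
          · exact absurd hv hxs
          · exact absurd hv hx's
      · obtain ⟨e, ⟨heM, hve⟩, hu⟩ := hM'cov v hv
        refine ⟨e, ⟨Or.inl (Or.inr heM), hve⟩, ?_⟩
        rintro f ⟨(hf | hf) | hf, hvf⟩
        · exact absurd hv (hss' v (hEmem _ (hME hf) v hvf))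
        · exact hu f ⟨hf, hvf⟩
        · rw [Set.mem_singleton_iff] at hf
          subst hf
          rcases Sym2.mem_iff.mp hvf with rfl | rfl
          · exact absurd hv hxs'
          · exact absurd hv hx's'
      · refine ⟨s(x, x'), ⟨Or.inr rfl, ?_⟩, ?_⟩
        · rcases hv with rfl | rfl <;> simp
        · rintro f ⟨(hf | hf) | hf, hvf⟩
          · rcases hv with rfl | rfl
            · exact absurd (hEmem _ (hME hf) v hvf) hxs
            · exact absurd (hEmem _ (hME hf) v hvf) hx's
          · rcases hv with rfl | rfl
            · exact absurd (hE'mem _ (hM'E hf) v hvf) hxs'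
            · exact absurd (hE'mem _ (hM'E hf) v hvf) hx's'
          · exact hf
  · intro N hN
    obtain ⟨hNE, hNcov⟩ := hN
    have hclass : ∀ e ∈ N, e ∈ E ∨ e ∈ E' ∨ e = s(x, x') ∨
        (∃ u ∈ U, e = s(u, x)) ∨ (∃ u ∈ U', e = s(u, x')) := by
      intro e he
      rcases hNE he with ((((h | h) | h) | h) | h)
      · exact Or.inl h
      · exact Or.inr (Or.inl h)
      · exact Or.inr (Or.inr (Or.inl h))
      · exact Or.inr (Or.inr (Or.inr (Or.inl h)))
      · exact Or.inr (Or.inr (Or.inr (Or.inr h)))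
    obtain ⟨ex, ⟨hexN, hxex⟩, hexuniq⟩ := hNcov x (by simp)
    obtain ⟨ex', ⟨hex'N, hx'ex'⟩, hex'uniq⟩ := hNcov x' (by simp)
    have hexcase : ex = s(x, x') ∨ ∃ u ∈ U, ex = s(u, x) := by
      rcases hclass ex hexN with h | h | h | h | h
      · exact absurd (hEmem _ h x hxex) hxs
      · exact absurd (hE'mem _ h x hxex) hxs'
      · exact Or.inl h
      · exact Or.inr h
      · obtain ⟨u, hu, rfl⟩ := h
        rcases Sym2.mem_iff.mp hxex with rfl | rfl
        · exact absurd (hU' hu) hxs'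
        · exact absurd rfl hxx'
    rcases hexcase with hA | hB
    · -- Case A : x matched to x'
      subst hA
      have hex'eq : ex' = s(x, x') := by
        have := hex'uniq s(x, x') ⟨hexN, by simp⟩
        exact this.symm ▸ rfl
      have ux : ∀ f ∈ N, x ∈ f → f = s(x, x') := fun f hf hxf => hexuniq f ⟨hf, hxf⟩
      have ux' : ∀ f ∈ N, x' ∈ f → f = s(x, x') := fun f hf hxf =>
        (hex'uniq f ⟨hf, hxf⟩).trans hex'eq
      have hNEpm : IsPMOn s E {e | e ∈ N ∧ e ∈ E} := by
        refine ⟨fun e he => he.2, fun v hv => ?_⟩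
        obtain ⟨e, ⟨heN, hve⟩, hu⟩ := hNcov v (Or.inl (Or.inl hv))
        have heE : e ∈ E := by
          rcases hclass e heN with h | h | h | h | h
          · exact h
          · exact absurd (hE'mem _ h v hve) (hss' v hv)
          · subst h
            rcases Sym2.mem_iff.mp hve with rfl | rfl
            · exact absurd hv hxs
            · exact absurd hv hx's
          · obtain ⟨u, hu', rfl⟩ := h
            have := ux _ heN (by simp)
            rw [this] at hve
            rcases Sym2.mem_iff.mp hve with rfl | rfl
            · exact absurd hv hxs
            · exact absurd hv hx's
          · obtain ⟨u, hu', rfl⟩ := h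
            have := ux' _ heN (by simp)
            rw [this] at hve
            rcases Sym2.mem_iff.mp hve with rfl | rfl
            · exact absurd hv hxs
            · exact absurd hv hx's
        exact ⟨e, ⟨⟨heN, heE⟩, hve⟩, fun g hg => hu g ⟨hg.1.1, hg.2⟩⟩
      have hNE'pm : IsPMOn s' E' {e | e ∈ N ∧ e ∈ E'} := by
        refine ⟨fun e he => he.2, fun v hv => ?_⟩
        obtain ⟨e, ⟨heN, hve⟩, hu⟩ := hNcov v (Or.inl (Or.inr hv))
        have heE : e ∈ E' := by
          rcases hclass e heN with h | h | h | h | h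
          · exact absurd hv (hss' v (hEmem _ h v hve))
          · exact h
          · subst h
            rcases Sym2.mem_iff.mp hve with rfl | rfl
            · exact absurd hv hxs'
            · exact absurd hv hx's'
          · obtain ⟨u, hu', rfl⟩ := h
            have := ux _ heN (by simp)
            rw [this] at hve
            rcases Sym2.mem_iff.mp hve with rfl | rfl
            · exact absurd hv hxs'
            · exact absurd hv hx's'
          · obtain ⟨u, hu', rfl⟩ := h
            have := ux' _ heN (by simp)
            rw [this] at hve
            rcases Sym2.mem_iff.mp hve with rfl | rfl
            · exact absurd hv hxs'
            · exact absurd hv hx's'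
        exact ⟨e, ⟨⟨heN, heE⟩, hve⟩, fun g hg => hu g ⟨hg.1.1, hg.2⟩⟩
      have hMeq := hMuniq _ hNEpm
      have hM'eq := hM'uniq _ hNE'pm
      ext e
      constructor
      · intro he
        rcases hclass e he with h | h | h | h | h
        · exact Or.inl (Or.inl (hMeq ▸ (⟨he, h⟩ : e ∈ {e | e ∈ N ∧ e ∈ E})))
        · exact Or.inl (Or.inr (hM'eq ▸ (⟨he, h⟩ : e ∈ {e | e ∈ N ∧ e ∈ E'})))
        · exact Or.inr h
        · obtain ⟨u, hu', rfl⟩ := h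
          exact Or.inr (ux _ he (by simp))
        · obtain ⟨u, hu', rfl⟩ := h
          exact Or.inr (ux' _ he (by simp))
      · rintro ((he | he) | he)
        · rw [← hMeq] at he; exact he.1
        · rw [← hM'eq] at he; exact he.1
        · rw [Set.mem_singleton_iff] at he; subst he; exact hexN
    · -- Case B : x matched to some u ∈ U, derive a contradiction
      exfalso
      obtain ⟨u, huU, hBeq⟩ := hB
      have hus : u ∈ s := hU huU
      have ux : ∀ f ∈ N, x ∈ f → f = s(u, x) := fun f hf hxf =>
        (hexuniq f ⟨hf, hxf⟩).trans hBeq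
      have hxx'notN : s(x, x') ∉ N := by
        intro h
        have := ux _ h (by simp)
        rw [Sym2.eq_iff] at this
        rcases this with ⟨h1, h2⟩ | ⟨h1, h2⟩
        · exact hxx' h2.symm
        · exact hx's (h2.symm ▸ hus)
      have hex'case : ∃ u' ∈ U', ex' = s(u', x') := by
        rcases hclass ex' hex'N with h | h | h | h | h
        · exact absurd (hEmem _ h x' hx'ex') hx's
        · exact absurd (hE'mem _ h x' hx'ex') hx's'
        · exact absurd (h ▸ hex'N) hxx'notN
        · obtain ⟨w, hw, rfl⟩ := h
          rcases Sym2.mem_iff.mp hx'ex' with rfl | rfl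
          · exact absurd (hU hw) hx's
          · exact absurd rfl hxx'.symm
        · exact h
      obtain ⟨u', hu'U, hB'eq⟩ := hex'case
      have hu's' : u' ∈ s' := hU' hu'U
      have ux' : ∀ f ∈ N, x' ∈ f → f = s(u', x') := fun f hf hxf =>
        (hex'uniq f ⟨hf, hxf⟩).trans hB'eq
      -- u's unique edge contains x, so u is not covered by any edge of N ∩ E
      have hunotE : ∀ f ∈ N, f ∈ E → u ∉ f := by
        intro f hfN hfE huf
        obtain ⟨eu, -, huu⟩ := hNcov u (Or.inl (Or.inl hus))
        have h1 := huu f ⟨hfN, huf⟩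
        have h2 := huu ex ⟨hexN, by rw [hBeq]; simp⟩
        have h3 : f = s(u, x) := by rw [h1, ← h2, hBeq]
        rw [h3] at hfE
        exact hxs (hEmem _ hfE x (by simp))
      -- N ∩ E is a perfect matching of s \ {u}
      have hpm : ∀ v ∈ s \ {u}, ∃! e, e ∈ {e | e ∈ N ∧ e ∈ E} ∧ v ∈ e := by
        rintro v ⟨hv, hvu⟩
        obtain ⟨e, ⟨heN, hve⟩, hu⟩ := hNcov v (Or.inl (Or.inl hv))
        have heE : e ∈ E := by
          rcases hclass e heN with h | h | h | h | h
          · exact h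
          · exact absurd (hE'mem _ h v hve) (hss' v hv)
          · exact absurd (h ▸ heN) hxx'notN
          · obtain ⟨w, hw, rfl⟩ := h
            have := ux _ heN (by simp)
            rw [this] at hve
            rcases Sym2.mem_iff.mp hve with rfl | rfl
            · exact absurd rfl hvu
            · exact absurd hv hxs
          · obtain ⟨w, hw, rfl⟩ := h
            have := ux' _ heN (by simp)
            rw [this] at hve
            rcases Sym2.mem_iff.mp hve with rfl | rfl
            · exact absurd hu's' (hss' v hv)
            · exact absurd hv hx's
        exact ⟨e, ⟨⟨heN, heE⟩, hve⟩, fun g hg => hu g ⟨hg.1.1, hg.2⟩⟩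
      have hedge : ∀ e ∈ {e | e ∈ N ∧ e ∈ E}, ¬ e.IsDiag ∧ ∀ v ∈ e, v ∈ s \ {u} := by
        rintro e ⟨heN, heE⟩
        refine ⟨(hE e heE).1, fun v hv => ⟨hEmem _ heE v hv, ?_⟩⟩
        rintro rfl
        exact hunotE e heN heE hv
      have heven1 : Even (s \ {u}).ncard :=
        even_ncard_of_pm' _ _ (Set.toFinite _) hedge hpm
      have heven2 : Even s.ncard :=
        even_ncard_of_pm' _ _ (Set.toFinite _)
          (fun e he => ⟨(hE e (hME he)).1, hEmem _ (hME he)⟩) hMcov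
      have hcard : (s \ {u}).ncard = s.ncard - 1 :=
        Set.ncard_diff_singleton_of_mem hus
      have hpos : 0 < s.ncard := (Set.ncard_pos (Set.toFinite _)).mpr ⟨u, hus⟩
      obtain ⟨k1, hk1⟩ := heven1
      obtain ⟨k2, hk2⟩ := heven2
      omega
end

section
/- Let G be a finite graph and M a matching of G such that there is no alternating cycle for M and exactly two vertices u and v are unmatched by M, and let e = (a, b) ∈ M. Then the graph G − e (G with the single edge e deleted) admits a perfect matching if and only if there exists an alternating path for M in G with endpoints u and v that crosses the edge e. -/
/-- A set of edges `M` is a matching of the simple graph `G` if every edge of `M` is an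
edge of `G` and no two edges of `M` share a vertex. -/
def IsMatchingOf {V : Type*} (G : SimpleGraph V) (M : Set (Sym2 V)) : Prop :=
  M ⊆ G.edgeSet ∧ ∀ v : V, ∀ e ∈ M, ∀ f ∈ M, v ∈ e → v ∈ f → e = f

/-- A closed walk is alternating for `M` if, of every two cyclically consecutive edges,
exactly one belongs to `M`. -/
def CycleAlt {V : Type*} {G : SimpleGraph V} (M : Set (Sym2 V)) {v : V}
    (c : G.Walk v v) : Prop :=
  ∀ i : Fin c.edges.length,
    (c.edges.get i ∈ M ↔
      c.edges.get ⟨(↑i + 1) % c.edges.length, Nat.mod_lt _ i.pos⟩ ∉ M)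

namespace Stmt9aux
open SimpleGraph Walk

variable {V : Type*}

lemma mem_sym2_cases {x : V} {f : Sym2 V} (h : x ∈ f) : ∃ z, f = s(x, z) :=
  ⟨Sym2.Mem.other h, (Sym2.other_spec h).symm⟩

lemma mem_support_of_mem_edges' {G : SimpleGraph V} {x y w : V} {p : G.Walk x y}
    {f : Sym2 V} (hf : f ∈ p.edges) (hw : w ∈ f) : w ∈ p.support := by
  obtain ⟨z, rfl⟩ := mem_sym2_cases hw
  exact p.fst_mem_support_of_mem_edges hf

lemma start_edge_eq {G : SimpleGraph V} {x x' y : V} (h : G.Adj x x') {q : G.Walk x' y}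
    (hx : x ∉ q.support) {f : Sym2 V} (hf : f ∈ (Walk.cons h q).edges) (hxf : x ∈ f) :
    f = s(x, x') := by
  rw [Walk.edges_cons] at hf
  rcases List.mem_cons.mp hf with rfl | hf
  · rfl
  · exact absurd (mem_support_of_mem_edges' hf hxf) hx

/-- For a nontrivial path, there is an edge at the start vertex, and it is unique. -/
lemma endpoint_edge {G : SimpleGraph V} {x y : V} (p : G.Walk x y) (hp : p.IsPath)
    (hxy : x ≠ y) :
    ∃ f ∈ p.edges, x ∈ f ∧ ∀ g ∈ p.edges, x ∈ g → g = f := by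
  obtain ⟨x', h, q, rfl⟩ := Walk.exists_eq_cons_of_ne hxy p
  have hx : x ∉ q.support := (Walk.cons_isPath_iff h q).mp hp |>.2
  exact ⟨s(x, x'), by simp, by simp, fun g hg hxg => start_edge_eq h hx hg hxg⟩

/-- The two edges at an internal vertex of a path, with the alternation relation. -/
lemma internal_edges {G : SimpleGraph V} {x y w : V} {p : G.Walk x y} (hp : p.IsPath)
    {R : Sym2 V → Sym2 V → Prop} (hchain : p.edges.Chain' R)
    (hw : w ∈ p.support) (hwx : w ≠ x) (hwy : w ≠ y) :
    ∃ f₁ f₂, f₁ ∈ p.edges ∧ f₂ ∈ p.edges ∧ w ∈ f₁ ∧ w ∈ f₂ ∧ R f₁ f₂ ∧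
      ∀ g ∈ p.edges, w ∈ g → g = f₁ ∨ g = f₂ := by
  haveI := Classical.decEq V
  have hspec := p.take_spec hw
  set q1 := p.takeUntil w hw with hq1
  set q2 := p.dropUntil w hw with hq2
  have hq1p : q1.IsPath := hp.takeUntil hw
  have hq2p : q2.IsPath := hp.dropUntil hw
  have hedges : p.edges = q1.edges ++ q2.edges := by
    conv_lhs => rw [← hspec]
    exact Walk.edges_append _ _
  -- decompose q2
  obtain ⟨z2, h2, r2, hq2eq⟩ := Walk.exists_eq_cons_of_ne hwy q2
  have hw2 : w ∉ r2.support := by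
    rw [hq2eq] at hq2p; exact ((Walk.cons_isPath_iff h2 r2).mp hq2p).2
  -- decompose q1.reverse
  have hq1rp : q1.reverse.IsPath := hq1p.reverse
  obtain ⟨z1, h1, r1, hq1req⟩ := Walk.exists_eq_cons_of_ne hwx q1.reverse
  have hw1 : w ∉ r1.support := by
    rw [hq1req] at hq1rp; exact ((Walk.cons_isPath_iff h1 r1).mp hq1rp).2
  have hq1edges : q1.edges = (s(w, z1) :: r1.edges).reverse := by
    have : q1.edges = q1.reverse.edges.reverse := by
      rw [Walk.edges_reverse, List.reverse_reverse]
    rw [this, hq1req, Walk.edges_cons]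
  have hq2edges : q2.edges = s(w, z2) :: r2.edges := by rw [hq2eq, Walk.edges_cons]
  have hmem1 : s(w, z1) ∈ p.edges := by
    rw [hedges, hq1edges]; simp
  have hmem2 : s(w, z2) ∈ p.edges := by
    rw [hedges, hq2edges]; simp
  have hR : R s(w, z1) s(w, z2) := by
    rw [hedges] at hchain
    have := (List.isChain_append.mp hchain).2.2
    apply this
    · rw [hq1edges]
      simp [List.getLast?_reverse]
    · rw [hq2edges]; rfl
  refine ⟨s(w, z1), s(w, z2), hmem1, hmem2, by simp, by simp, hR, ?_⟩
  intro g hg hwg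
  rw [hedges] at hg
  rcases List.mem_append.mp hg with hg | hg
  · left
    have hg' : g ∈ q1.reverse.edges := by rw [Walk.edges_reverse]; simpa using hg
    rw [hq1req] at hg'
    exact start_edge_eq h1 hw1 hg' hwg
  · right
    rw [hq2eq] at hg
    exact start_edge_eq h2 hw2 hg hwg


lemma edges_get_eq {G : SimpleGraph V} {x y : V} (p : G.Walk x y) :
    ∀ (i : ℕ) (h : i < p.edges.length),
      p.edges.get ⟨i, h⟩ = s(p.getVert i, p.getVert (i + 1)) := by
  induction p with
  | nil => intro i h; simp at h
  | cons ha q ih =>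
    intro i h
    cases i with
    | zero => simp [Walk.getVert_zero, Walk.getVert_cons_succ]
    | succ n =>
      simp only [Walk.edges_cons, List.get_cons_succ, Walk.getVert_cons_succ]
      exact ih n (by simpa [Walk.edges_cons] using h)


lemma forward {V : Type*} [Fintype V] (G : SimpleGraph V) (M : Set (Sym2 V))
    (hM : IsMatchingOf G M)
    (hnocycle : ¬ ∃ (w : V) (c : G.Walk w w), c.IsCycle ∧ CycleAlt M c)
    (u v : V) (huv : u ≠ v)
    (hunmatched : {w : V | ∀ e ∈ M, w ∉ e} = {u, v})
    (a b : V) (he : s(a, b) ∈ M)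
    (N : Set (Sym2 V)) (hN : IsPerfectMatchingOf (G.deleteEdges {s(a, b)}) N) :
    ∃ p : G.Walk u v, p.IsPath ∧
      p.edges.Chain' (fun e₁ e₂ => (e₁ ∈ M ↔ e₂ ∉ M)) ∧ s(a, b) ∈ p.edges := by
  classical
  set Δ : Set (Sym2 V) := (M \ N) ∪ (N \ M) with hΔdef
  have hNG : N ⊆ G.edgeSet := by
    intro f hf
    have := hN.1 hf
    rw [SimpleGraph.edgeSet_deleteEdges] at this
    exact this.1
  have heN : s(a, b) ∉ N := by
    intro hf
    have := hN.1 hf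
    rw [SimpleGraph.edgeSet_deleteEdges] at this
    exact this.2 rfl
  have hΔG : Δ ⊆ G.edgeSet := by
    rintro f (⟨hf, -⟩ | ⟨hf, -⟩)
    · exact hM.1 hf
    · exact hNG hf
  have heΔ : s(a, b) ∈ Δ := Or.inl ⟨he, heN⟩
  set D : SimpleGraph V := SimpleGraph.fromEdgeSet Δ with hDdef
  have hDedge : ∀ {x y : V}, D.Adj x y → s(x, y) ∈ Δ := fun h =>
    ((SimpleGraph.fromEdgeSet_adj Δ).mp h).1
  have hΔ' : ∀ {x y : V} (q : D.Walk x y) (f : Sym2 V), f ∈ q.edges → f ∈ Δ := by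
    intro x y q f hf
    have := q.edges_subset_edgeSet hf
    rw [SimpleGraph.edgeSet_fromEdgeSet] at this
    exact this.1
  have hΔGedges : ∀ {x y : V} (q : D.Walk x y), ∀ f ∈ q.edges, f ∈ G.edgeSet :=
    fun q f hf => hΔG (hΔ' q f hf)
  have hmatched : ∀ w : V, w ≠ u → w ≠ v → ∃ m ∈ M, w ∈ m := by
    intro w hwu hwv
    by_contra h
    push_neg at h
    have hw : w ∈ {w : V | ∀ e ∈ M, w ∉ e} := fun e heM => h e heM
    rw [hunmatched] at hw
    simp only [Set.mem_insert_iff, Set.mem_singleton_iff] at hw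
    tauto
  -- core alternation fact
  have altRel : ∀ f ∈ Δ, ∀ g ∈ Δ, ∀ w : V, w ∈ f → w ∈ g → f ≠ g → (f ∈ M ↔ g ∉ M) := by
    intro f hf g hg w hwf hwg hfg
    constructor
    · intro hfM hgM
      exact hfg (hM.2 w f hfM g hgM hwf hwg)
    · intro hgM
      by_contra hfM
      have hfN : f ∈ N := by
        rcases hf with ⟨h1, -⟩ | ⟨h1, -⟩
        · exact absurd h1 hfM
        · exact h1
      have hgN : g ∈ N := by
        rcases hg with ⟨h1, -⟩ | ⟨h1, -⟩
        · exact absurd h1 hgM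
        · exact h1
      exact hfg ((hN.2 w).unique ⟨hfN, hwf⟩ ⟨hgN, hwg⟩)
  -- chain alternation along trails of D
  have chainalt : ∀ {x y : V} (q : D.Walk x y), q.edges.Nodup →
      q.edges.Chain' (fun e₁ e₂ => (e₁ ∈ M ↔ e₂ ∉ M)) := by
    intro x y q
    induction q with
    | nil => exact fun _ => List.isChain_nil
    | @cons x x' y h r ih =>
      intro hnd
      rw [Walk.edges_cons] at hnd
      have hnd' := hnd.of_cons
      cases r with
      | nil => exact List.isChain_singleton _
      | @cons _ x'' _ h2 r2 =>
        rw [Walk.edges_cons, Walk.edges_cons]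
        rw [Walk.edges_cons] at hnd'
        refine List.isChain_cons_cons.mpr ⟨?_, by rw [← Walk.edges_cons]; exact ih hnd'⟩
        refine altRel _ (hDedge h) _ (hDedge h2) x' (by simp) (by simp) ?_
        intro hEq
        exact (List.nodup_cons.mp hnd).1 (hEq ▸ List.mem_cons_self)
  -- D is acyclic
  have hacyc : ∀ (w : V) (c : D.Walk w w), ¬ c.IsCycle := by
    intro w c hc
    apply hnocycle
    have hce : ∀ f ∈ c.edges, f ∈ G.edgeSet := hΔGedges c
    refine ⟨w, c.transfer G hce, hc.transfer hce, ?_⟩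
    have hE : (c.transfer G hce).edges = c.edges := Walk.edges_transfer c hce
    have hlen : (c.transfer G hce).edges.length = c.edges.length := by rw [hE]
    have hnd : c.edges.Nodup := hc.edges_nodup
    have h3 : 3 ≤ c.length := hc.three_le_length
    have hLL : c.edges.length = c.length := c.length_edges
    have key : ∀ (i j : Fin c.edges.length), (j : ℕ) = ((i : ℕ) + 1) % c.edges.length →
        (c.edges.get i ∈ M ↔ c.edges.get j ∉ M) := by
      rintro ⟨i, hi⟩ ⟨j, hj⟩ hji
      simp only at hji
      have hf := edges_get_eq c i hi
      have hg := edges_get_eq c j hj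
      have hmemf : c.edges.get ⟨i, hi⟩ ∈ Δ := hΔ' c _ (List.get_mem _ _)
      have hmemg : c.edges.get ⟨j, hj⟩ ∈ Δ := hΔ' c _ (List.get_mem _ _)
      have hne : c.edges.get ⟨i, hi⟩ ≠ c.edges.get ⟨j, hj⟩ := by
        intro hEq
        have := (hnd.get_inj_iff).mp hEq
        have hij : i = j := by simpa using this
        rcases Nat.lt_or_ge (i + 1) c.edges.length with hlt | hge
        · rw [Nat.mod_eq_of_lt hlt] at hji; omega
        · have : i + 1 = c.edges.length := by omega
          rw [this, Nat.mod_self] at hji; omega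
      rcases Nat.lt_or_ge (i + 1) c.edges.length with hlt | hge
      · have hj' : j = i + 1 := by rw [hji, Nat.mod_eq_of_lt hlt]
        subst hj'
        refine altRel _ hmemf _ hmemg (c.getVert (i + 1)) ?_ ?_ hne
        · rw [hf]; simp
        · rw [hg]; simp
      · have hieq : i + 1 = c.edges.length := by omega
        have hj' : j = 0 := by rw [hji, hieq, Nat.mod_self]  -- careful: hji : j = (i+1) % len
        subst hj'
        refine altRel _ hmemf _ hmemg w ?_ ?_ hne
        · rw [hf]
          have : c.getVert (i + 1) = w := by
            rw [hieq, hLL]; exact c.getVert_length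
          rw [this]; simp
        · rw [hg]
          have : c.getVert 0 = w := c.getVert_zero
          rw [this]; simp
    intro i
    rw [List.get_of_eq hE i, List.get_of_eq hE _]
    apply key
    simp [hlen]
  -- the set of lengths of paths through s(a,b)
  set S : Set ℕ :=
    {n | ∃ (s t : V) (q : D.Walk s t), q.IsPath ∧ s(a, b) ∈ q.edges ∧ q.length = n}
    with hSdef
  have hab : a ≠ b := (G.mem_edgeSet.mp (hM.1 he)).ne
  have hDab : D.Adj a b := (SimpleGraph.fromEdgeSet_adj Δ).mpr ⟨heΔ, hab⟩
  have hS1 : 1 ∈ S := by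
    refine ⟨a, b, Walk.cons hDab Walk.nil, ?_, by simp, by simp⟩
    simp [Walk.cons_isPath_iff, hab]
  have hSbd : ∀ n ∈ S, n ≤ Fintype.card V := by
    rintro n ⟨s, t, q, hq, -, rfl⟩
    exact hq.length_lt.le
  -- maximal element
  set n₀ := Nat.findGreatest (· ∈ S) (Fintype.card V) with hn₀
  have hn₀S : n₀ ∈ S := Nat.findGreatest_spec (hSbd 1 hS1) hS1
  have hn₀max : ∀ m ∈ S, m ≤ n₀ := fun m hm => Nat.le_findGreatest (hSbd m hm) hm
  obtain ⟨s, t, q, hq, hqe, hqlen⟩ := hn₀S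
  have hmax : ∀ (s' t' : V) (q' : D.Walk s' t'), q'.IsPath → s(a, b) ∈ q'.edges →
      q'.length ≤ q.length := by
    intro s' t' q' hq' hq'e
    rw [hqlen]
    exact hn₀max _ ⟨s', t', q', hq', hq'e, rfl⟩
  clear hqlen hn₀max
  -- endpoints are u or v
  have endpoint_claim : ∀ (s t : V) (q : D.Walk s t), q.IsPath → s(a, b) ∈ q.edges →
      (∀ (s' t' : V) (q' : D.Walk s' t'), q'.IsPath → s(a, b) ∈ q'.edges →
        q'.length ≤ q.length) → s = u ∨ s = v := by
    clear hmax hqe hq q s t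
    intro s t q hq hqe hmax
    by_contra hcon
    push_neg at hcon
    obtain ⟨hsu, hsv⟩ := hcon
    have hst : s ≠ t := by
      rintro rfl
      rw [(Walk.isPath_iff_eq_nil (p := q)).mp hq] at hqe
      simp at hqe
    obtain ⟨s₂, hads, r, rfl⟩ := Walk.exists_eq_cons_of_ne hst q
    have hsr : s ∉ r.support := ((Walk.cons_isPath_iff _ _).mp hq).2
    have hf0 : s(s, s₂) ∈ Δ := hDedge hads
    obtain ⟨ms, hmsM, hsms⟩ := hmatched s hsu hsv
    obtain ⟨ns, ⟨hnsN, hsns⟩, -⟩ := hN.2 s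
    have hexists : ∃ f1 ∈ Δ, s ∈ f1 ∧ f1 ≠ s(s, s₂) := by
      by_cases hf0M : s(s, s₂) ∈ M
      · have hf0N : s(s, s₂) ∉ N := by
          rcases hf0 with ⟨-, h1⟩ | ⟨-, h1⟩
          · exact h1
          · exact absurd hf0M h1
        have hnsne : ns ≠ s(s, s₂) := fun h => hf0N (h ▸ hnsN)
        have hnsM : ns ∉ M := fun hnsM =>
          hnsne (hM.2 s ns hnsM s(s, s₂) hf0M hsns (by simp))
        exact ⟨ns, Or.inr ⟨hnsN, hnsM⟩, hsns, hnsne⟩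
      · have hf0N : s(s, s₂) ∈ N := by
          rcases hf0 with ⟨h1, -⟩ | ⟨h1, -⟩
          · exact absurd h1 hf0M
          · exact h1
        have hmsne : ms ≠ s(s, s₂) := fun h => hf0M (h ▸ hmsM)
        have hmsN : ms ∉ N := fun hmsN =>
          hmsne ((hN.2 s).unique ⟨hmsN, hsms⟩ ⟨hf0N, by simp⟩)
        exact ⟨ms, Or.inl ⟨hmsM, hmsN⟩, hsms, hmsne⟩
    obtain ⟨f1, hf1Δ, hsf1, hf1ne⟩ := hexists
    obtain ⟨z, rfl⟩ := mem_sym2_cases hsf1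
    have hsz : s ≠ z := (G.mem_edgeSet.mp (hΔG hf1Δ)).ne
    have hDzs : D.Adj z s := by
      refine (SimpleGraph.fromEdgeSet_adj Δ).mpr ⟨?_, hsz.symm⟩
      rwa [Sym2.eq_swap]
    by_cases hzs : z ∈ (Walk.cons hads r).support
    · -- creates a cycle: contradiction
      set q1 := (Walk.cons hads r).takeUntil z hzs with hq1def
      have hq1 : q1.IsPath := hq.takeUntil hzs
      have hne : s(z, s) ∉ q1.edges := by
        intro hmem
        have h1 : s(z, s) ∈ (Walk.cons hads r).edges :=
          Walk.edges_takeUntil_subset _ hzs hmem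
        have h2 : s(z, s) = s(s, s₂) := start_edge_eq hads hsr h1 (by simp)
        rw [Sym2.eq_swap] at h2
        exact hf1ne h2
      exact hacyc z _ ((Walk.cons_isCycle_iff q1 hDzs).mpr ⟨hq1, hne⟩)
    · -- extend the path: contradicts maximality
      have hp' : (Walk.cons hDzs (Walk.cons hads r)).IsPath :=
        (Walk.cons_isPath_iff _ _).mpr ⟨hq, hzs⟩
      have hlen := hmax z t _ hp' (by rw [Walk.edges_cons]; exact List.mem_cons_of_mem _ hqe)
      simp only [Walk.length_cons] at hlen
      omega
  have hsu : s = u ∨ s = v := endpoint_claim s t q hq hqe hmax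
  have htu : t = u ∨ t = v := by
    refine endpoint_claim t s q.reverse hq.reverse ?_ ?_
    · rwa [Walk.edges_reverse, List.mem_reverse]
    · intro s' t' q' hq' hq'e
      rw [Walk.length_reverse]
      exact hmax s' t' q' hq' hq'e
  have hst : s ≠ t := by
    rintro rfl
    rw [(Walk.isPath_iff_eq_nil (p := q)).mp hq] at hqe
    simp at hqe
  -- assemble the result
  have transfer_result : ∀ (q : D.Walk u v), q.IsPath → s(a, b) ∈ q.edges →
      ∃ p : G.Walk u v, p.IsPath ∧
        p.edges.Chain' (fun e₁ e₂ => (e₁ ∈ M ↔ e₂ ∉ M)) ∧ s(a, b) ∈ p.edges := by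
    intro q hq hqe
    refine ⟨q.transfer G (hΔGedges q), hq.transfer _, ?_, ?_⟩
    · rw [Walk.edges_transfer]
      exact chainalt q hq.isTrail.edges_nodup
    · rwa [Walk.edges_transfer]
  rcases hsu with rfl | rfl
  · rcases htu with rfl | rfl
    · exact absurd rfl hst
    · exact transfer_result q hq hqe
  · rcases htu with rfl | rfl
    · exact transfer_result q.reverse hq.reverse
        (by rwa [Walk.edges_reverse, List.mem_reverse])
    · exact absurd rfl hst


lemma backward {V : Type*} (G : SimpleGraph V) (M : Set (Sym2 V))
    (hM : IsMatchingOf G M) (u v : V) (huv : u ≠ v)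
    (hunmatched : {w : V | ∀ e ∈ M, w ∉ e} = {u, v})
    (a b : V) (he : s(a, b) ∈ M)
    (p : G.Walk u v) (hp : p.IsPath)
    (hchain : p.edges.Chain' (fun e₁ e₂ => (e₁ ∈ M ↔ e₂ ∉ M)))
    (hep : s(a, b) ∈ p.edges) :
    ∃ N, IsPerfectMatchingOf (G.deleteEdges {s(a, b)}) N := by
  set ES : Set (Sym2 V) := {f | f ∈ p.edges} with hES
  set N : Set (Sym2 V) := (M \ ES) ∪ (ES \ M) with hN
  have hu : ∀ e ∈ M, u ∉ e := by
    have := (Set.ext_iff.mp hunmatched u).mpr (by simp)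
    exact this
  have hv : ∀ e ∈ M, v ∉ e := by
    have := (Set.ext_iff.mp hunmatched v).mpr (by simp)
    exact this
  have hmatched : ∀ w : V, w ≠ u → w ≠ v → ∃ m ∈ M, w ∈ m := by
    intro w hwu hwv
    by_contra h
    push_neg at h
    have hw : w ∈ {w : V | ∀ e ∈ M, w ∉ e} := fun e heM => h e heM
    rw [hunmatched] at hw
    simp only [Set.mem_insert_iff, Set.mem_singleton_iff] at hw
    tauto
  refine ⟨N, ?_, ?_⟩
  · -- N ⊆ edgeSet of deleted graph
    intro f hf
    rw [SimpleGraph.edgeSet_deleteEdges]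
    rcases hf with ⟨hfM, hfE⟩ | ⟨hfE, hfM⟩
    · exact ⟨hM.1 hfM, by rintro rfl; exact hfE hep⟩
    · exact ⟨p.edges_subset_edgeSet hfE, by rintro rfl; exact hfM he⟩
  · intro w
    by_cases hws : w ∈ p.support
    · by_cases hwu : w = u
      · subst hwu
        obtain ⟨f, hf, hwf, huniq⟩ := endpoint_edge p hp huv
        have hfM : f ∉ M := fun hfM => hu f hfM hwf
        refine ⟨f, ⟨Or.inr ⟨hf, hfM⟩, hwf⟩, ?_⟩
        rintro g ⟨hg | hg, hwg⟩
        · exact absurd hwg (hu g hg.1)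
        · exact huniq g hg.1 hwg
      · by_cases hwv : w = v
        · subst hwv
          have hps : w ∈ p.reverse.support := by rwa [Walk.support_reverse, List.mem_reverse]
          obtain ⟨f, hf, hwf, huniq⟩ := endpoint_edge p.reverse hp.reverse huv.symm
          have hf' : f ∈ p.edges := by rwa [Walk.edges_reverse, List.mem_reverse] at hf
          have hfM : f ∉ M := fun hfM => hv f hfM hwf
          refine ⟨f, ⟨Or.inr ⟨hf', hfM⟩, hwf⟩, ?_⟩
          rintro g ⟨hg | hg, hwg⟩
          · exact absurd hwg (hv g hg.1)
          · exact huniq g (by rw [Walk.edges_reverse, List.mem_reverse]; exact hg.1) hwg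
        · -- internal vertex
          obtain ⟨f₁, f₂, h1, h2, hw1, hw2, hR, huniq⟩ :=
            internal_edges hp hchain hws hwu hwv
          by_cases hf1M : f₁ ∈ M
          · have hf2M : f₂ ∉ M := hR.mp hf1M
            refine ⟨f₂, ⟨Or.inr ⟨h2, hf2M⟩, hw2⟩, ?_⟩
            rintro g ⟨hg | hg, hwg⟩
            · exact absurd (hM.2 w g hg.1 f₁ hf1M hwg hw1 ▸ h1) hg.2
            · rcases huniq g hg.1 hwg with rfl | rfl
              · exact absurd hf1M hg.2
              · rfl
          · have hf2M : f₂ ∈ M := by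
              by_contra h; exact hf1M (hR.mpr h)
            refine ⟨f₁, ⟨Or.inr ⟨h1, hf1M⟩, hw1⟩, ?_⟩
            rintro g ⟨hg | hg, hwg⟩
            · exact absurd (hM.2 w g hg.1 f₂ hf2M hwg hw2 ▸ h2) hg.2
            · rcases huniq g hg.1 hwg with rfl | rfl
              · rfl
              · exact absurd hf2M hg.2
    · -- w not on the path
      have hwu : w ≠ u := fun h => hws (h ▸ p.start_mem_support)
      have hwv : w ≠ v := fun h => hws (h ▸ p.end_mem_support)
      obtain ⟨m, hmM, hwm⟩ := hmatched w hwu hwv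
      have hmE : m ∉ ES := fun hmE => hws (mem_support_of_mem_edges' hmE hwm)
      refine ⟨m, ⟨Or.inl ⟨hmM, hmE⟩, hwm⟩, ?_⟩
      rintro g ⟨hg | hg, hwg⟩
      · exact hM.2 w g hg.1 m hmM hwg hwm
      · exact absurd (mem_support_of_mem_edges' hg.1 hwg) hws


end Stmt9aux

/-- Let `M` be a matching of a finite graph `G` with no alternating cycle and exactly two
unmatched vertices `u ≠ v`, and let `e = s(a, b) ∈ M`. Then `G − e` admits a perfect
matching if and only if there is an alternating path for `M` in `G` from `u` to `v`
crossing the edge `e`. -/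
theorem stmt9 {V : Type*} [Fintype V] (G : SimpleGraph V) (M : Set (Sym2 V))
    (hM : IsMatchingOf G M)
    (hnocycle : ¬ ∃ (w : V) (c : G.Walk w w), c.IsCycle ∧ CycleAlt M c)
    (u v : V) (huv : u ≠ v)
    (hunmatched : {w : V | ∀ e ∈ M, w ∉ e} = {u, v})
    (a b : V) (he : s(a, b) ∈ M) :
    (∃ N, IsPerfectMatchingOf (G.deleteEdges {s(a, b)}) N) ↔
      ∃ p : G.Walk u v, p.IsPath ∧
        p.edges.Chain' (fun e₁ e₂ => (e₁ ∈ M ↔ e₂ ∉ M)) ∧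
        s(a, b) ∈ p.edges := by
  constructor
  · rintro ⟨N, hN⟩
    exact Stmt9aux.forward G M hM hnocycle u v huv hunmatched a b he N hN
  · rintro ⟨p, hp, hchain, hep⟩
    exact Stmt9aux.backward G M hM u v huv hunmatched a b he p hp hchain hep
end

section
/- Let G be a finite graph, M a matching of G with no alternating cycle for M and with exactly two unmatched vertices u and v, let e = (a, b) ∈ M, and let M'' be a perfect matching of the graph G − e. Then the symmetric difference (M \ {e}) △ M'' is a vertex-disjoint union of two alternating paths for M \ {e} whose four endpoints are exactly u, v, a, b; moreover one of the two paths joins u to an endpoint of e and the other joins v to the other endpoint of e (in particular, no path of the decomposition joins a to b). -/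
namespace Stmt10Aux

open SimpleGraph

variable {V : Type*} {G : SimpleGraph V} {M₁ M'' : Set (Sym2 V)} {f g : V → V}

/-- Abstract setup: `f` is the partner function of a perfect matching `M''`, and `g` is the
partner function of a partial matching `M₁` (with `g x = x` meaning `x` unmatched). -/
structure AltSetup (G : SimpleGraph V) (M₁ M'' : Set (Sym2 V)) (f g : V → V) : Prop where
  hfM : ∀ x, s(x, f x) ∈ M''
  hfU : ∀ x y, s(x, y) ∈ M'' → y = f x
  hgM : ∀ x, g x ≠ x → s(x, g x) ∈ M₁
  hgU : ∀ x y, s(x, y) ∈ M₁ → y = g x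
  hM₁G : M₁ ⊆ G.edgeSet
  hM''G : M'' ⊆ G.edgeSet

namespace AltSetup

variable (S : AltSetup G M₁ M'' f g)
include S

lemma fadj (x : V) : G.Adj x (f x) := (G.mem_edgeSet).1 (S.hM''G (S.hfM x))

lemma fne (x : V) : f x ≠ x := fun h => G.irrefl (h ▸ S.fadj x)

lemma ff (x : V) : f (f x) = x := ((S.hfU (f x) x) (Sym2.eq_swap ▸ S.hfM x)).symm

lemma gadj {x : V} (h : g x ≠ x) : G.Adj x (g x) := (G.mem_edgeSet).1 (S.hM₁G (S.hgM x h))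

lemma gg {x : V} (h : g x ≠ x) : g (g x) = x :=
  ((S.hgU (g x) x) (Sym2.eq_swap ▸ S.hgM x h)).symm

/-- `g x = x` iff `x` is in no edge of `M₁`. -/
lemma gfix_iff (x : V) : g x = x ↔ ∀ ε ∈ M₁, x ∉ ε := by
  constructor
  · intro hgx ε hε hx
    obtain ⟨y, rfl⟩ := Sym2.mem_iff_exists.1 hx
    have := S.hgU x y hε
    subst this
    rw [hgx] at hε
    exact G.irrefl ((G.mem_edgeSet).1 (S.hM₁G hε))
  · intro h
    by_contra hne
    exact h _ (S.hgM x hne) (Sym2.mem_mk_left _ _)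

end AltSetup

/-- The alternating sequence starting at `w`: even steps use `f`, odd steps use `g`. -/
def altseq (f g : V → V) (w : V) : ℕ → V
  | 0 => w
  | n + 1 => if Even n then f (altseq f g w n) else g (altseq f g w n)

lemma altseq_zero (f g : V → V) (w : V) : altseq f g w 0 = w := rfl

lemma altseq_even {n : ℕ} (h : Even n) (f g : V → V) (w : V) :
    altseq f g w (n + 1) = f (altseq f g w n) := by simp [altseq, h]

lemma altseq_odd {n : ℕ} (h : ¬ Even n) (f g : V → V) (w : V) :
    altseq f g w (n + 1) = g (altseq f g w n) := by simp [altseq, h]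

/-- `Goodup f g w j` means the walk has not stopped strictly before `j`. -/
def Goodup (f g : V → V) (w : V) (j : ℕ) : Prop :=
  ∀ m, 0 < m → m < j → ¬ Even m → g (altseq f g w m) ≠ altseq f g w m

lemma Goodup.mono {j j' : ℕ} (h : Goodup f g w j) (hle : j' ≤ j) :
    Goodup f g w j' := fun m h1 h2 => h m h1 (h2.trans_le hle)

namespace AltSetup
section Seq

variable (S : AltSetup G M₁ M'' f g) {w : V}
include S

/-- Key injectivity: as long as the walk has not stopped, it does not repeat vertices
(assuming the start `w` is unmatched by `M₁`). -/
lemma altseq_inj (hw : g w = w) :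
    ∀ j, Goodup f g w j → ∀ i < j, altseq f g w i ≠ altseq f g w j := by
  intro j
  induction j using Nat.strong_induction_on with
  | _ j IH =>
    intro Pj i hij heq
    set A := altseq f g w with hA
    have hstepf : ∀ m, Even m → A (m+1) = f (A m) := fun m h => altseq_even h f g w
    have hstepg : ∀ m, ¬ Even m → A (m+1) = g (A m) := fun m h => altseq_odd h f g w
    have finv : ∀ m, Even m → f (A (m+1)) = A m := by
      intro m h; rw [hstepf m h]; exact S.ff _
    have ginv : ∀ m, ¬ Even m → 0 < m → m < j → g (A (m+1)) = A m := by
      intro m h h0 hmj; rw [hstepg m h]; exact S.gg (Pj m h0 hmj h)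
    have even' : ∀ m : ℕ, m % 2 = 0 → Even m := fun m h => Nat.even_iff.2 h
    have odd' : ∀ m : ℕ, m % 2 = 1 → ¬ Even m := fun m h => by simp [Nat.even_iff, h]
    by_cases hje : j % 2 = 0
    · -- j even, and j ≥ 2
      have hj2 : 2 ≤ j := by omega
      have hj1odd : ¬ Even (j - 1) := odd' _ (by omega)
      have hgood : g (A (j-1)) ≠ A (j-1) := Pj (j-1) (by omega) (by omega) hj1odd
      have hgj : g (A j) = A (j-1) := by
        have := ginv (j-1) hj1odd (by omega) (by omega)
        rwa [show j - 1 + 1 = j by omega] at this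
      have hedge : s(A (j-1), A j) ∈ M₁ := by
        have h := S.hgM (A (j-1)) hgood
        rwa [← hstepg (j-1) hj1odd, show j-1+1=j by omega] at h
      rcases Nat.eq_zero_or_pos i with rfl | hi0
      · exact (S.gfix_iff w).1 hw _ hedge (heq ▸ Sym2.mem_mk_right _ _)
      by_cases hie : i % 2 = 0
      · -- i even positive
        have hgi : g (A i) = A (i-1) := by
          have := ginv (i-1) (odd' _ (by omega)) (by omega) (by omega)
          rwa [show i - 1 + 1 = i by omega] at this
        have : A (i-1) = A (j-1) := by rw [← hgi, ← hgj, heq]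
        exact IH (j-1) (by omega) (Pj.mono (by omega)) (i-1) (by omega) this
      · -- i odd
        have hPi : g (A i) ≠ A i := Pj i (by omega) (by omega) (odd' _ (by omega))
        have hstep : A (i+1) = g (A i) := hstepg i (odd' _ (by omega))
        rcases eq_or_lt_of_le (show i + 1 ≤ j by omega) with hij1 | hij1
        · rw [hij1, ← heq] at hstep; exact hPi hstep.symm
        · have : A (i+1) = A (j-1) := by rw [hstep, heq, hgj]
          exact IH (j-1) (by omega) (Pj.mono (by omega)) (i+1) (by omega) this
    · -- j odd
      have hfj : f (A j) = A (j-1) := by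
        have := finv (j-1) (even' _ (by omega))
        rwa [show j - 1 + 1 = j by omega] at this
      rcases Nat.eq_zero_or_pos i with rfl | hi0
      · -- i = 0
        have h1 : A 1 = A (j-1) := by
          rw [hstepf 0 (even' 0 rfl), show A 0 = A j from heq, hfj]
        rcases eq_or_lt_of_le (show 1 ≤ j by omega) with hj1 | hj1
        · have h2 := hstepf 0 (even' 0 rfl)
          exact S.fne (A 0) (by rw [← h2, h1, ← hj1])
        · have hj3 : 3 ≤ j := by omega
          exact IH (j-1) (by omega) (Pj.mono (by omega)) 1 (by omega) h1
      by_cases hie : i % 2 = 0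
      · -- i even positive
        have hstep : A (i+1) = f (A i) := hstepf i (even' _ (by omega))
        rcases eq_or_lt_of_le (show i + 1 ≤ j by omega) with hij1 | hij1
        · rw [hij1, ← heq] at hstep
          exact S.fne (A i) hstep.symm
        · have : A (i+1) = A (j-1) := by rw [hstep, heq, hfj]
          exact IH (j-1) (by omega) (Pj.mono (by omega)) (i+1) (by omega) this
      · -- i odd
        have hfi : f (A i) = A (i-1) := by
          have := finv (i-1) (even' _ (by omega))
          rwa [show i - 1 + 1 = i by omega] at this
        have : A (i-1) = A (j-1) := by rw [← hfi, ← hfj, heq]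
        exact IH (j-1) (by omega) (Pj.mono (by omega)) (i-1) (by omega) this

end Seq


section Stop

variable (S : AltSetup G M₁ M'' f g) {w : V}

/-- The stopping time of the alternating walk from `w`. -/
noncomputable def stopN (f g : V → V) (w : V) : ℕ :=
  sInf {n | ¬ Even n ∧ g (altseq f g w n) = altseq f g w n}

include S

lemma stop_exists [Fintype V] (hw : g w = w) :
    {n | ¬ Even n ∧ g (altseq f g w n) = altseq f g w n}.Nonempty := by
  by_contra h
  rw [Set.not_nonempty_iff_eq_empty, Set.eq_empty_iff_forall_notMem] at h
  have hgood : ∀ j, Goodup f g w j := by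
    intro j m h0 hm hodd heq
    exact h m ⟨hodd, heq⟩
  obtain ⟨i, j, hne, heq⟩ := Finite.exists_ne_map_eq_of_infinite (altseq f g w)
  rcases lt_trichotomy i j with h' | h' | h'
  · exact S.altseq_inj hw j (hgood j) i h' heq
  · exact hne h'
  · exact S.altseq_inj hw i (hgood i) j h' heq.symm

variable [Fintype V]

lemma stopN_spec (hw : g w = w) :
    ¬ Even (stopN f g w) ∧
      g (altseq f g w (stopN f g w)) = altseq f g w (stopN f g w) :=
  Nat.sInf_mem (S.stop_exists hw)

lemma stopN_goodup (hw : g w = w) : Goodup f g w (stopN f g w) := by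
  intro m h0 hm hodd heq
  exact (Nat.notMem_of_lt_sInf hm) ⟨hodd, heq⟩

lemma stopN_pos (hw : g w = w) : 0 < stopN f g w := by
  rcases Nat.eq_zero_or_pos (stopN f g w) with h | h
  · have := (S.stopN_spec hw).1
    rw [h] at this
    exact absurd (by simp : Even 0) this
  · exact h

/-- Interior vertices of the walk are matched by `M₁`. -/
lemma interior_not_fix (hw : g w = w) :
    ∀ m, 0 < m → m < stopN f g w →
      g (altseq f g w m) ≠ altseq f g w m := by
  intro m h0 hm
  by_cases he : Even m
  · -- even interior: reached by a g-step, so it lies in an M₁ edge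
    have hm2 : m % 2 = 0 := Nat.even_iff.1 he
    have hm1odd : ¬ Even (m - 1) := by
      intro hh; rw [Nat.even_iff] at hh; omega
    have hprev : g (altseq f g w (m-1)) ≠ altseq f g w (m-1) :=
      S.stopN_goodup hw (m-1) (by omega) (by omega) hm1odd
    have hedge : s(altseq f g w (m-1), altseq f g w m) ∈ M₁ := by
      have h := S.hgM _ hprev
      rwa [← altseq_odd hm1odd f g w, show m - 1 + 1 = m by omega] at h
    intro hfix
    exact (S.gfix_iff _).1 hfix _ hedge (Sym2.mem_mk_right _ _)
  · exact S.stopN_goodup hw m h0 hm he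

lemma altseq_inj' (hw : g w = w) {i j : ℕ} (hi : i ≤ stopN f g w)
    (hj : j ≤ stopN f g w) (hij : i ≠ j) : altseq f g w i ≠ altseq f g w j := by
  rcases lt_or_gt_of_ne hij with h | h
  · exact fun heq => S.altseq_inj hw j ((S.stopN_goodup hw).mono hj) i h heq
  · exact fun heq => S.altseq_inj hw i ((S.stopN_goodup hw).mono hi) j h heq.symm

lemma stopN_end_ne (hw : g w = w) : altseq f g w (stopN f g w) ≠ w := by
  intro h
  exact S.altseq_inj' hw (Nat.zero_le _) le_rfl
    (by have := S.stopN_pos hw; omega) h.symm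

/-- The walk from the stopping vertex is the reverse of the walk from `w`. -/
lemma altseq_rev (hw : g w = w) :
    ∀ j ≤ stopN f g w,
      altseq f g (altseq f g w (stopN f g w)) j = altseq f g w (stopN f g w - j) := by
  set N := stopN f g w with hN
  set A := altseq f g w with hA
  have hNodd : ¬ Even N := (S.stopN_spec hw).1
  intro j
  induction j with
  | zero => intro _; simp [altseq_zero]
  | succ j IH =>
    intro hj
    have hj' : j ≤ N := by omega
    have hrev := IH hj'
    have hN2 : N % 2 = 1 := Nat.not_even_iff.1 hNodd
    by_cases hje : Even j
    · have hj2 : j % 2 = 0 := Nat.even_iff.1 hje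
      have hNj1 : Even (N - j - 1) := Nat.even_iff.2 (by omega)
      have hstep : A (N - j) = f (A (N - j - 1)) := by
        have := altseq_even hNj1 f g w
        rwa [show N - j - 1 + 1 = N - j by omega] at this
      rw [altseq_even hje, hrev, hstep, S.ff, show N - j - 1 = N - (j+1) by omega]
    · have hj2 : j % 2 = 1 := Nat.not_even_iff.1 hje
      have hNj1odd : ¬ Even (N - j - 1) := by
        intro hh; rw [Nat.even_iff] at hh; omega
      have hNj1pos : 0 < N - j - 1 := by omega
      have hprev : g (A (N - j - 1)) ≠ A (N - j - 1) :=
        S.interior_not_fix hw _ hNj1pos (by omega)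
      have hstep : A (N - j) = g (A (N - j - 1)) := by
        have := altseq_odd hNj1odd f g w
        rwa [show N - j - 1 + 1 = N - j by omega] at this
      rw [altseq_odd hje, hrev, hstep, S.gg hprev, show N - j - 1 = N - (j+1) by omega]

/-- The stopping time from the end vertex equals the original stopping time. -/
lemma stopN_rev (hw : g w = w) :
    stopN f g (altseq f g w (stopN f g w)) = stopN f g w ∧
      altseq f g (altseq f g w (stopN f g w)) (stopN f g w) = w := by
  set N := stopN f g w with hN
  set t := altseq f g w N with ht
  have hNodd : ¬ Even N := (S.stopN_spec hw).1
  have hBN : altseq f g t N = w := by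
    have := S.altseq_rev hw N le_rfl
    simpa [hN, ht, altseq_zero] using this
  have hmem : N ∈ {n | ¬ Even n ∧ g (altseq f g t n) = altseq f g t n} := by
    refine ⟨hNodd, ?_⟩
    rw [hBN, hw]
  have hle : stopN f g t ≤ N := Nat.sInf_le hmem
  have hge : N ≤ stopN f g t := by
    by_contra h
    push_neg at h
    have ht' : g t = t := (S.stopN_spec hw).2
    have hmem' := Nat.sInf_mem (S.stop_exists ht')
    set N' := stopN f g t with hN'
    have hN'le : N' < N := h
    obtain ⟨hN'odd', hN'fix'⟩ := hmem'
    have hN'odd : ¬ Even N' := hN'odd'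
    have hN'fix : g (altseq f g t N') = altseq f g t N' := hN'fix'
    have hrev : altseq f g t N' = altseq f g w (N - N') := S.altseq_rev hw N' (le_of_lt hN'le)
    rw [hrev] at hN'fix
    have hN'pos : 0 < N' := by
      rcases Nat.eq_zero_or_pos N' with h0 | h0
      · rw [h0] at hN'odd; exact absurd (by simp : Even 0) hN'odd
      · exact h0
    exact S.interior_not_fix hw (N - N') (by omega) (by omega) hN'fix
  exact ⟨le_antisymm hle hge, hBN⟩

end Stop
end AltSetup

/-- Generic construction of a walk along a sequence of adjacent vertices. -/
lemma mk_walk {G : SimpleGraph V} (z : ℕ → V) :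
    ∀ n k, (∀ m, m < n → G.Adj (z (k+m)) (z (k+m+1))) →
    ∃ p : G.Walk (z k) (z (k+n)),
      p.edges = (List.range n).map (fun i => s(z (k+i), z (k+i+1))) ∧
      p.support = (List.range (n+1)).map (fun i => z (k+i)) := by
  intro n
  induction n with
  | zero => intro k _; exact ⟨SimpleGraph.Walk.nil, by simp, by simp [List.range_succ]⟩
  | succ n IH =>
    intro k h
    have adj0 : G.Adj (z k) (z (k+1)) := by simpa using h 0 (by omega)
    obtain ⟨p', hpe, hps⟩ := IH (k+1) (by
      intro m hm
      have := h (m+1) (by omega)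
      rwa [show k+(m+1) = k+1+m by omega] at this)
    refine ⟨(SimpleGraph.Walk.cons adj0 p').copy rfl (congrArg z (by omega)), ?_, ?_⟩
    · rw [SimpleGraph.Walk.edges_copy, SimpleGraph.Walk.edges_cons, hpe,
        List.range_succ_eq_map (n := n), List.map_cons, List.map_map]
      refine congrArg₂ _ rfl (List.map_congr_left ?_)
      intro i _
      simp only [Function.comp_apply]
      rw [show k + (i+1) = k + 1 + i by omega]
    · rw [SimpleGraph.Walk.support_copy, SimpleGraph.Walk.support_cons, hps,
        List.range_succ_eq_map (n := n+1), List.map_cons, List.map_map]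
      refine congrArg₂ _ rfl (List.map_congr_left ?_)
      intro i _
      simp only [Function.comp_apply]
      rw [show k + (i+1) = k + 1 + i by omega]



namespace AltSetup

section Edges

variable (S : AltSetup G M₁ M'' f g) {w : V} [Fintype V]
include S

lemma adj_step (hw : g w = w) :
    ∀ m < stopN f g w, G.Adj (altseq f g w m) (altseq f g w (m+1)) := by
  intro m hm
  by_cases he : Even m
  · rw [altseq_even he]; exact S.fadj _
  · rw [altseq_odd he]
    exact S.gadj (S.stopN_goodup hw m (Nat.pos_of_ne_zero (by rintro rfl; exact he (by simp))) hm he)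

lemma g_prev (hw : g w = w) {m : ℕ} (hm0 : 2 ≤ m) (hme : Even m) (hm : m ≤ stopN f g w) :
    g (altseq f g w m) = altseq f g w (m-1) := by
  have hm2 := Nat.even_iff.1 hme
  have hodd : ¬ Even (m-1) := by intro hh; rw [Nat.even_iff] at hh; omega
  have hfix : g (altseq f g w (m-1)) ≠ altseq f g w (m-1) :=
    S.stopN_goodup hw (m-1) (by omega) (by omega) hodd
  have hstep : altseq f g w m = g (altseq f g w (m-1)) := by
    have := altseq_odd hodd f g w
    rwa [show m - 1 + 1 = m by omega] at this
  rw [hstep, S.gg hfix]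

lemma f_prev {m : ℕ} (hm0 : 1 ≤ m) (hme : ¬ Even m) :
    f (altseq f g w m) = altseq f g w (m-1) := by
  have hm2 := Nat.not_even_iff.1 hme
  have heven : Even (m-1) := Nat.even_iff.2 (by omega)
  have hstep : altseq f g w m = f (altseq f g w (m-1)) := by
    have := altseq_even heven f g w
    rwa [show m - 1 + 1 = m by omega] at this
  rw [hstep, S.ff]

lemma edge_even (hw : g w = w) {m : ℕ} (hm : m < stopN f g w) (he : Even m) :
    s(altseq f g w m, altseq f g w (m+1)) ∈ M'' ∧
      s(altseq f g w m, altseq f g w (m+1)) ∉ M₁ := by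
  have hm2 := Nat.even_iff.1 he
  constructor
  · rw [altseq_even he]; exact S.hfM _
  · intro hmem
    have hg : altseq f g w (m+1) = g (altseq f g w m) := S.hgU _ _ hmem
    rcases Nat.eq_zero_or_pos m with rfl | hm0
    · rw [altseq_zero, hw] at hg
      have hg' : altseq f g w (0+1) = altseq f g w 0 := by rw [altseq_zero]; exact hg
      exact S.altseq_inj' hw (i := 0+1) (j := 0) (by omega) (by omega) (by omega) hg'
    · have h2 : 2 ≤ m := by omega
      rw [S.g_prev hw h2 he (le_of_lt hm)] at hg
      exact S.altseq_inj' hw (i := m+1) (j := m-1) (by omega) (by omega) (by omega) hg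
  
lemma edge_odd (hw : g w = w) {m : ℕ} (hm : m < stopN f g w) (ho : ¬ Even m) :
    s(altseq f g w m, altseq f g w (m+1)) ∈ M₁ ∧
      s(altseq f g w m, altseq f g w (m+1)) ∉ M'' := by
  have hm2 := Nat.not_even_iff.1 ho
  constructor
  · rw [altseq_odd ho]
    exact S.hgM _ (S.stopN_goodup hw m (by omega) hm ho)
  · intro hmem
    have hf : altseq f g w (m+1) = f (altseq f g w m) := S.hfU _ _ hmem
    rw [S.f_prev (by omega) ho] at hf
    exact S.altseq_inj' hw (i := m+1) (j := m-1) (by omega) (by omega) (by omega) hf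

/-- closure of the walk vertex set under `f`. -/
lemma f_closure (hw : g w = w) {i : ℕ} (hi : i ≤ stopN f g w) :
    ∃ j ≤ stopN f g w, altseq f g w j = f (altseq f g w i) := by
  have hNodd := Nat.not_even_iff.1 (S.stopN_spec hw).1
  by_cases he : Even i
  · have hi2 := Nat.even_iff.1 he
    exact ⟨i+1, by omega, altseq_even he f g w⟩
  · have hi2 := Nat.not_even_iff.1 he
    exact ⟨i-1, by omega, (S.f_prev (m := i) (by omega) he).symm⟩

/-- closure of the walk vertex set under `g` (at non-fixed points). -/
lemma g_closure (hw : g w = w) {i : ℕ} (hi : i ≤ stopN f g w)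
    (hfix : g (altseq f g w i) ≠ altseq f g w i) :
    ∃ j ≤ stopN f g w, altseq f g w j = g (altseq f g w i) := by
  have hNodd := Nat.not_even_iff.1 (S.stopN_spec hw).1
  by_cases he : Even i
  · have hi2 := Nat.even_iff.1 he
    rcases Nat.eq_zero_or_pos i with rfl | hi0
    · rw [altseq_zero, hw] at hfix; exact absurd rfl hfix
    · exact ⟨i-1, by omega, (S.g_prev hw (m := i) (by omega) he hi).symm⟩
  · have hi2 := Nat.not_even_iff.1 he
    have hiN : i ≠ stopN f g w := by
      rintro rfl; exact hfix (S.stopN_spec hw).2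
    exact ⟨i+1, by omega, altseq_odd he f g w⟩

/-- the `f`-edge at any walk vertex is a walk edge. -/
lemma fedge_mem (hw : g w = w) {i : ℕ} (hi : i ≤ stopN f g w) :
    s(altseq f g w i, f (altseq f g w i)) ∈
      (List.range (stopN f g w)).map
        (fun m => s(altseq f g w m, altseq f g w (m+1))) := by
  have hNodd := Nat.not_even_iff.1 (S.stopN_spec hw).1
  rw [List.mem_map]
  by_cases he : Even i
  · have hi2 := Nat.even_iff.1 he
    exact ⟨i, List.mem_range.2 (by omega), by rw [altseq_even he]⟩
  · have hi2 := Nat.not_even_iff.1 he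
    refine ⟨i-1, List.mem_range.2 (by omega), ?_⟩
    rw [show i - 1 + 1 = i by omega, S.f_prev (by omega) he, Sym2.eq_swap]

/-- the `g`-edge at any non-fixed walk vertex is a walk edge. -/
lemma gedge_mem (hw : g w = w) {i : ℕ} (hi : i ≤ stopN f g w)
    (hfix : g (altseq f g w i) ≠ altseq f g w i) :
    s(altseq f g w i, g (altseq f g w i)) ∈
      (List.range (stopN f g w)).map
        (fun m => s(altseq f g w m, altseq f g w (m+1))) := by
  have hNodd := Nat.not_even_iff.1 (S.stopN_spec hw).1
  rw [List.mem_map]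
  by_cases he : Even i
  · have hi2 := Nat.even_iff.1 he
    rcases Nat.eq_zero_or_pos i with rfl | hi0
    · rw [altseq_zero, hw] at hfix; exact absurd rfl hfix
    refine ⟨i-1, List.mem_range.2 (by omega), ?_⟩
    rw [show i - 1 + 1 = i by omega, S.g_prev hw (by omega) he hi, Sym2.eq_swap]
  · have hi2 := Nat.not_even_iff.1 he
    have hiN : i ≠ stopN f g w := by
      rintro rfl; exact hfix (S.stopN_spec hw).2
    exact ⟨i, List.mem_range.2 (by omega), by rw [altseq_odd he]⟩

/-- The packaged alternating path from an unmatched vertex `w`. -/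
lemma main_path (hw : g w = w) :
    ∃ p : G.Walk w (altseq f g w (stopN f g w)),
      p.edges = (List.range (stopN f g w)).map
        (fun m => s(altseq f g w m, altseq f g w (m+1))) ∧
      p.support = (List.range (stopN f g w + 1)).map (altseq f g w) ∧
      p.IsPath ∧
      p.edges.Chain' (fun e₁ e₂ => (e₁ ∈ M₁ ↔ e₂ ∉ M₁)) := by
  set N := stopN f g w with hN
  set A := altseq f g w with hA
  have hNodd := Nat.not_even_iff.1 (S.stopN_spec hw).1
  obtain ⟨p0, hpe, hps⟩ := mk_walk A N 0 (fun m hm => by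
    simpa using S.adj_step hw m (by omega))
  simp only [Nat.zero_add] at hpe hps
  refine ⟨(p0.copy (by simp [hA, altseq_zero]) (congrArg A (by omega))), ?_, ?_, ?_, ?_⟩
  · rw [SimpleGraph.Walk.edges_copy, hpe]
  · rw [SimpleGraph.Walk.support_copy, hps]
  · apply SimpleGraph.Walk.IsPath.mk'
    rw [SimpleGraph.Walk.support_copy, hps]
    refine List.Nodup.map_on ?_ List.nodup_range
    intro x hx y hy hxy
    by_contra hne
    exact S.altseq_inj' hw (i := x) (j := y) (by have := List.mem_range.1 hx; omega)
      (by have := List.mem_range.1 hy; omega) hne hxy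
  · rw [SimpleGraph.Walk.edges_copy, hpe, List.Chain', List.isChain_map]
    rw [show N = (N-1) + 1 by omega]
    rw [List.isChain_range_succ]
    intro m hm
    by_cases he : Even m
    · have h1 := (S.edge_even hw (m := m) (by omega) he).2
      have h2 := (S.edge_odd hw (m := m+1) (by omega) (by
        have := Nat.even_iff.1 he
        intro hh; rw [Nat.even_iff] at hh; omega)).1
      constructor
      · intro hh; exact absurd hh h1
      · intro hh; exact absurd h2 hh
    · have h1 := (S.edge_odd hw (m := m) (by omega) he).1
      have h2 := (S.edge_even hw (m := m+1) (by omega) (by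
        have := Nat.not_even_iff.1 he
        exact Nat.even_iff.2 (by omega))).2
      exact ⟨fun _ => h2, fun _ => h1⟩

/-- If the alternating walk from `x` never stops, it closes into an (even) cycle through `x`. -/
lemma altseq_cycle [Fintype V] {x : V}
    (hnofix : ∀ m, g (altseq f g x m) ≠ altseq f g x m) :
    ∃ L, L % 2 = 0 ∧ 2 ≤ L ∧ altseq f g x L = x ∧
      (∀ i < L, ∀ j < L, altseq f g x i = altseq f g x j → i = j) := by
  set A := altseq f g x with hA
  have hstepf : ∀ m, Even m → A (m+1) = f (A m) := fun m h => altseq_even h f g x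
  have hstepg : ∀ m, ¬ Even m → A (m+1) = g (A m) := fun m h => altseq_odd h f g x
  have finv : ∀ m, ¬ Even m → 1 ≤ m → f (A m) = A (m-1) := fun m h h1 => S.f_prev h1 h
  have ginv : ∀ m, Even m → 2 ≤ m → g (A m) = A (m-1) := by
    intro m h h1
    have hodd : ¬ Even (m-1) := by
      have := Nat.even_iff.1 h; intro hh; rw [Nat.even_iff] at hh; omega
    have hstep : A m = g (A (m-1)) := by
      have := hstepg (m-1) hodd
      rwa [show m - 1 + 1 = m by omega] at this
    rw [hstep, S.gg (hnofix (m-1))]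
  have hex : ∃ L, ∃ i < L, A i = A L := by
    obtain ⟨i, j, hne, heq⟩ := Finite.exists_ne_map_eq_of_infinite A
    rcases lt_trichotomy i j with h' | h' | h'
    · exact ⟨j, i, h', heq⟩
    · exact absurd h' hne
    · exact ⟨i, j, h', heq.symm⟩
  obtain ⟨L, hLmem, hminP⟩ : ∃ L, (∃ i < L, A i = A L) ∧ ∀ m < L, ¬ ∃ i' < m, A i' = A m :=
    ⟨sInf {L | ∃ i < L, A i = A L}, Nat.sInf_mem hex, fun m hm => Nat.notMem_of_lt_sInf hm⟩
  obtain ⟨i, hiL, heq⟩ := hLmem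
  have hmin : ∀ m < L, ∀ i' < m, A i' ≠ A m := fun m hm i' hi' heq' => hminP m hm ⟨i', hi', heq'⟩
  have hinj : ∀ i' < L, ∀ j' < L, A i' = A j' → i' = j' := by
    intro i' hi' j' hj' heq'
    by_contra hne
    rcases lt_trichotomy i' j' with h' | h' | h'
    · exact hmin j' hj' i' h' heq'
    · exact hne h'
    · exact hmin i' hi' j' h' heq'.symm
  -- show L is even and i = 0
  by_cases hLe : Even L
  · have hL2 : 2 ≤ L := by have := Nat.even_iff.1 hLe; omega
    have hgL : g (A L) = A (L-1) := ginv L hLe hL2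
    rcases Nat.eq_zero_or_pos i with rfl | hi0
    · exact ⟨L, Nat.even_iff.1 hLe, hL2, heq.symm, hinj⟩
    by_cases hie : Even i
    · have hgi : g (A i) = A (i-1) := ginv i hie (by have := Nat.even_iff.1 hie; omega)
      have : A (i-1) = A (L-1) := by rw [← hgi, ← hgL, heq]
      exact absurd this (by
        apply hmin (L-1) (by omega) (i-1)
        have := Nat.even_iff.1 hLe; have := Nat.even_iff.1 hie; omega)
    · have h1 := Nat.not_even_iff.1 hie
      have hstep : A (i+1) = g (A i) := hstepg i hie
      rcases eq_or_lt_of_le (show i + 1 ≤ L by omega) with h2 | h2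
      · rw [h2, ← heq] at hstep
        exact absurd hstep.symm (hnofix i)
      · have : A (i+1) = A (L-1) := by rw [hstep, heq, hgL]
        exact absurd this (by
          apply hmin (L-1) (by omega) (i+1)
          have := Nat.even_iff.1 hLe; omega)
  · have hL1 : 1 ≤ L := by omega
    have hfL : f (A L) = A (L-1) := finv L hLe hL1
    have hLodd := Nat.not_even_iff.1 hLe
    exfalso
    rcases Nat.eq_zero_or_pos i with rfl | hi0
    · have h1 : A 1 = A (L-1) := by
        rw [hstepf 0 (by simp), show A 0 = A L from heq, hfL]
      rcases eq_or_lt_of_le hL1 with h2 | h2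
      · have h3 : A 1 = f (A 0) := hstepf 0 (by simp)
        rw [← h2] at heq
        exact S.fne (A 0) (by rw [← h3, ← heq])
      · rcases eq_or_lt_of_le (show 1 ≤ L - 1 by omega) with h3 | h3
        · omega
        · exact hmin (L-1) (by omega) 1 h3 h1
    by_cases hie : Even i
    · have hstep : A (i+1) = f (A i) := hstepf i hie
      rcases eq_or_lt_of_le (show i + 1 ≤ L by omega) with h2 | h2
      · rw [h2, ← heq] at hstep
        exact S.fne (A i) hstep.symm
      · have : A (i+1) = A (L-1) := by rw [hstep, heq, hfL]
        exact absurd this (by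
          apply hmin (L-1) (by omega) (i+1)
          have := Nat.even_iff.1 hie; omega)
    · have hfi : f (A i) = A (i-1) := finv i hie (by omega)
      have : A (i-1) = A (L-1) := by rw [← hfi, ← hfL, heq]
      exact hmin (L-1) (by omega) (i-1) (by omega) this

end Edges
end AltSetup


/-- From an even alternating closed sequence, build an alternating cycle. -/
lemma cycle_contra {G : SimpleGraph V} {M : Set (Sym2 V)} (z : ℕ → V) (L : ℕ)
    (hL4 : 4 ≤ L) (hLe : L % 2 = 0) (hz : z L = z 0)
    (hadj : ∀ m < L, G.Adj (z m) (z (m+1)))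
    (hinj : ∀ i < L, ∀ j < L, z i = z j → i = j)
    (halt : ∀ m < L, (s(z m, z (m+1)) ∈ M ↔ ¬ Even m)) :
    ∃ (w : V) (c : G.Walk w w), c.IsCycle ∧ CycleAlt M c := by
  obtain ⟨p0, hpe, hps⟩ := mk_walk z L 0 (fun m hm => by simpa using hadj m (by omega))
  simp only [Nat.zero_add] at hpe hps
  set c : G.Walk (z 0) (z 0) := p0.copy rfl (by rw [show (0:ℕ)+L = L by omega, hz]) with hc
  have hce : c.edges = (List.range L).map (fun i => s(z i, z (i+1))) := by
    rw [hc, SimpleGraph.Walk.edges_copy, hpe]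
  have hcs : c.support = (List.range (L+1)).map (fun i => z i) := by
    rw [hc, SimpleGraph.Walk.support_copy, hps]
  have hlen : c.edges.length = L := by rw [hce]; simp
  have hget : ∀ (i : ℕ) (hi : i < c.edges.length), c.edges.get ⟨i, hi⟩ = s(z i, z (i+1)) := by
    intro i hi
    simp only [hce, List.get_eq_getElem, List.getElem_map, List.getElem_range]
  refine ⟨z 0, c, ?_, ?_⟩
  · rw [SimpleGraph.Walk.isCycle_def]
    refine ⟨⟨?_⟩, ?_, ?_⟩
    · -- edges nodup
      rw [hce]
      refine List.Nodup.map_on ?_ List.nodup_range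
      intro m hm m' hm' hmm
      rw [List.mem_range] at hm hm'
      rcases Sym2.eq_iff.1 hmm with ⟨h1, h2⟩ | ⟨h1, h2⟩
      · exact hinj m hm m' hm' h1
      · -- z m = z (m'+1), z (m+1) = z m'
        by_contra hne
        rcases eq_or_lt_of_le (show m'+1 ≤ L by omega) with hm1 | hm1
        · rw [hm1, hz] at h1
          have hm0 : m = 0 := hinj m hm 0 (by omega) h1
          subst hm0
          have : (1:ℕ) = m' := hinj 1 (by omega) m' hm' h2
          omega
        · have e1 : m = m' + 1 := hinj m hm (m'+1) hm1 h1
          rcases eq_or_lt_of_le (show m+1 ≤ L by omega) with hm2 | hm2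
          · rw [hm2, hz] at h2
            have : m' = 0 := hinj m' hm' 0 (by omega) h2.symm
            omega
          · have e2 : m + 1 = m' := hinj (m+1) hm2 m' hm' h2
            omega
    · -- c ≠ nil
      intro hnil
      have : c.edges = [] := by rw [hnil]; rfl
      rw [hce] at this
      have := congrArg List.length this
      simp at this
      omega
    · -- support tail nodup
      rw [hcs, List.range_succ_eq_map, List.map_cons, List.tail_cons, List.map_map]
      refine List.Nodup.map_on ?_ List.nodup_range
      intro m hm m' hm' hmm
      rw [List.mem_range] at hm hm'
      simp only [Function.comp_apply, Nat.succ_eq_add_one] at hmm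
      rcases eq_or_lt_of_le (show m+1 ≤ L by omega) with h1 | h1 <;>
        rcases eq_or_lt_of_le (show m'+1 ≤ L by omega) with h2 | h2
      · omega
      · rw [h1, hz] at hmm
        have : (0:ℕ) = m' + 1 := hinj 0 (by omega) (m'+1) h2 hmm
        omega
      · rw [h2, hz] at hmm
        have : m + 1 = 0 := hinj (m+1) h1 0 (by omega) hmm
        omega
      · have := hinj (m+1) h1 (m'+1) h2 hmm
        omega
  · -- CycleAlt
    intro i
    obtain ⟨iv, hiv⟩ := i
    have hivL : iv < L := by rwa [hlen] at hiv
    have hmod : (iv + 1) % c.edges.length < L := by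
      rw [hlen]; exact Nat.mod_lt _ (by omega)
    have hpos : 0 < c.edges.length := by rw [hlen]; omega
    simp only [Fin.val_mk]
    rw [hget iv hiv, hget ((iv+1) % c.edges.length) (Nat.mod_lt _ hpos)]
    rw [halt iv hivL, halt _ hmod]
    have e1 : ((iv + 1) % c.edges.length) % 2 = (iv + 1) % 2 := by
      rw [hlen]
      exact Nat.mod_mod_of_dvd _ (Nat.dvd_of_mod_eq_zero hLe)
    simp only [Nat.not_even_iff, not_not, Nat.even_iff]
    rw [e1]
    omega


end Stmt10Aux
section Main

open Stmt10Aux Stmt10Aux.AltSetup SimpleGraph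

theorem stmt10X {V : Type*} [Fintype V] (G : SimpleGraph V) (M : Set (Sym2 V))
    (hM : (M ⊆ G.edgeSet ∧ ∀ v : V, ∀ e ∈ M, ∀ f ∈ M, v ∈ e → v ∈ f → e = f))
    (hnocycle : ¬ ∃ (w : V) (c : G.Walk w w), c.IsCycle ∧ CycleAlt M c)
    (u v : V) (huv : u ≠ v)
    (hunmatched : {w : V | ∀ e ∈ M, w ∉ e} = {u, v})
    (a b : V) (he : s(a, b) ∈ M)
    (M'' : Set (Sym2 V))
    (hM'' : (M'' ⊆ (G.deleteEdges {s(a, b)}).edgeSet ∧ ∀ v : V, ∃! e, e ∈ M'' ∧ v ∈ e)) :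
    ∃ (c d : V), s(c, d) = s(a, b) ∧
      ∃ (p : G.Walk u c) (q : G.Walk v d),
        p.IsPath ∧ q.IsPath ∧
        p.edges.Chain' (fun e₁ e₂ => (e₁ ∈ M \ {s(a, b)} ↔ e₂ ∉ M \ {s(a, b)})) ∧
        q.edges.Chain' (fun e₁ e₂ => (e₁ ∈ M \ {s(a, b)} ↔ e₂ ∉ M \ {s(a, b)})) ∧
        List.Disjoint p.support q.support ∧
        {e | e ∈ p.edges ∨ e ∈ q.edges} = symmDiff (M \ {s(a, b)}) M'' := by
  classical
  obtain ⟨hMG, hMuniq⟩ := hM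
  obtain ⟨hM''G0, hM''uniq⟩ := hM''
  have hadjab : G.Adj a b := (G.mem_edgeSet).1 (hMG he)
  have hab : a ≠ b := G.ne_of_adj hadjab
  -- the perfect-matching partner function f
  have hfex : ∀ x, ∃ y, s(x, y) ∈ M'' := by
    intro x
    obtain ⟨ε, ⟨hε, hxε⟩, -⟩ := hM''uniq x
    obtain ⟨y, rfl⟩ := Sym2.mem_iff_exists.1 hxε
    exact ⟨y, hε⟩
  choose f hf using hfex
  have hM''G : M'' ⊆ G.edgeSet := by
    intro ε hε
    have := hM''G0 hε
    rw [SimpleGraph.edgeSet_deleteEdges] at this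
    exact this.1
  have hM''e : s(a, b) ∉ M'' := by
    intro hε
    have := hM''G0 hε
    rw [SimpleGraph.edgeSet_deleteEdges] at this
    exact this.2 rfl
  have hfU : ∀ x y, s(x, y) ∈ M'' → y = f x := by
    intro x y hxy
    obtain ⟨ε, -, huniq⟩ := hM''uniq x
    have h1 := huniq _ ⟨hxy, Sym2.mem_mk_left x y⟩
    have h2 := huniq _ ⟨hf x, Sym2.mem_mk_left _ _⟩
    rw [← h2] at h1
    rcases Sym2.eq_iff.1 h1 with ⟨-, h⟩ | ⟨hx, hy⟩
    · exact h
    · exact hy.trans hx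
  -- the partial-matching partner function g
  have hM₁G : M \ {s(a, b)} ⊆ G.edgeSet := fun ε hε => hMG hε.1
  have hgex : ∀ x : V, ∃ y,
      ((∃ z, s(x, z) ∈ M \ {s(a, b)}) → s(x, y) ∈ M \ {s(a, b)}) ∧
      ((¬ ∃ z, s(x, z) ∈ M \ {s(a, b)}) → y = x) := by
    intro x
    by_cases h : ∃ z, s(x, z) ∈ M \ {s(a, b)}
    · exact ⟨h.choose, fun _ => h.choose_spec, fun h' => absurd h h'⟩
    · exact ⟨x, fun h' => absurd h' h, fun _ => rfl⟩
  choose g hg1 hg2 using hgex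
  have hgU : ∀ x y, s(x, y) ∈ M \ {s(a, b)} → y = g x := by
    intro x y hxy
    have hgx := hg1 x ⟨y, hxy⟩
    have h1 := hMuniq x _ hxy.1 _ hgx.1 (Sym2.mem_mk_left _ _) (Sym2.mem_mk_left _ _)
    rcases Sym2.eq_iff.1 h1 with ⟨-, h⟩ | ⟨hx, hy⟩
    · exact h
    · exact hy.trans hx
  have hgM : ∀ x, g x ≠ x → s(x, g x) ∈ M \ {s(a, b)} := by
    intro x hne
    by_cases h : ∃ z, s(x, z) ∈ M \ {s(a, b)}
    · exact hg1 x h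
    · exact absurd (hg2 x h) hne
  have S : AltSetup G (M \ {s(a, b)}) M'' f g := ⟨hf, hfU, hgM, hgU, hM₁G, hM''G⟩
  -- characterization of unmatched vertices
  have hunm : ∀ x : V, (∀ ε ∈ M, x ∉ ε) ↔ (x = u ∨ x = v) := by
    intro x
    constructor
    · intro h
      have : x ∈ ({u, v} : Set V) := by rw [← hunmatched]; exact h
      simpa using this
    · intro h
      have : x ∈ {w : V | ∀ e ∈ M, w ∉ e} := by rw [hunmatched]; simpa using h
      exact this
  have hTchar : ∀ x : V, g x = x ↔ (x = u ∨ x = v ∨ x = a ∨ x = b) := by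
    intro x
    rw [S.gfix_iff]
    constructor
    · intro hnoM₁
      by_cases hx : ∀ ε ∈ M, x ∉ ε
      · rcases (hunm x).1 hx with h | h
        · exact Or.inl h
        · exact Or.inr (Or.inl h)
      · push_neg at hx
        obtain ⟨ε, hε, hxε⟩ := hx
        by_cases hεe : ε = s(a, b)
        · subst hεe
          rcases Sym2.mem_iff.1 hxε with h | h
          · exact Or.inr (Or.inr (Or.inl h))
          · exact Or.inr (Or.inr (Or.inr h))
        · exact absurd hxε (hnoM₁ ε ⟨hε, hεe⟩)
    · intro h ε hε hxε
      rcases h with rfl | rfl | rfl | rfl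
      · exact (hunm x).2 (Or.inl rfl) ε hε.1 hxε
      · exact (hunm x).2 (Or.inr rfl) ε hε.1 hxε
      · exact hε.2 (hMuniq x ε hε.1 _ he hxε (Sym2.mem_mk_left _ _))
      · exact hε.2 (hMuniq x ε hε.1 _ he hxε (Sym2.mem_mk_right _ _))
  have hgu : g u = u := (hTchar u).2 (Or.inl rfl)
  have hgv : g v = v := (hTchar v).2 (Or.inr (Or.inl rfl))
  have hga : g a = a := (hTchar a).2 (Or.inr (Or.inr (Or.inl rfl)))
  have hgb : g b = b := (hTchar b).2 (Or.inr (Or.inr (Or.inr rfl)))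
  have hunotin : u ∉ s(a, b) := (hunm u).2 (Or.inl rfl) _ he
  have hvnotin : v ∉ s(a, b) := (hunm v).2 (Or.inr rfl) _ he
  have hua : u ≠ a := fun h => hunotin (by rw [h]; exact Sym2.mem_mk_left _ _)
  have hub : u ≠ b := fun h => hunotin (by rw [h]; exact Sym2.mem_mk_right _ _)
  have hva : v ≠ a := fun h => hvnotin (by rw [h]; exact Sym2.mem_mk_left _ _)
  have hvb : v ≠ b := fun h => hvnotin (by rw [h]; exact Sym2.mem_mk_right _ _)
  -- the two walks
  have hNuodd : ¬ Even (stopN f g u) := (S.stopN_spec hgu).1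
  have hNvodd : ¬ Even (stopN f g v) := (S.stopN_spec hgv).1
  have htuT : altseq f g u (stopN f g u) = v ∨ altseq f g u (stopN f g u) = a ∨
      altseq f g u (stopN f g u) = b := by
    rcases (hTchar _).1 (S.stopN_spec hgu).2 with h | h | h | h
    · exact absurd h (S.stopN_end_ne hgu)
    · exact Or.inl h
    · exact Or.inr (Or.inl h)
    · exact Or.inr (Or.inr h)
  have htvT : altseq f g v (stopN f g v) = u ∨ altseq f g v (stopN f g v) = a ∨
      altseq f g v (stopN f g v) = b := by
    rcases (hTchar _).1 (S.stopN_spec hgv).2 with h | h | h | h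
    · exact Or.inl h
    · exact absurd h (S.stopN_end_ne hgv)
    · exact Or.inr (Or.inl h)
    · exact Or.inr (Or.inr h)
  -- reversal facts
  have hrevu := S.stopN_rev hgu
  have hrevv := S.stopN_rev hgv
  -- key endpoint determination
  have htub : (altseq f g u (stopN f g u) = a ∧ altseq f g v (stopN f g v) = b) ∨
      (altseq f g u (stopN f g u) = b ∧ altseq f g v (stopN f g v) = a) := by
    have hexcl : ∀ t, altseq f g u (stopN f g u) = t → altseq f g v (stopN f g v) ≠ t := by
      intro t htu htv
      rw [← htv] at htu
      -- then reverse of u-walk = v-walk start, giving u = v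
      obtain ⟨hN1, hE1⟩ := hrevu
      obtain ⟨hN2, hE2⟩ := hrevv
      rw [htu] at hE1 hN1
      have hNN : stopN f g u = stopN f g v := hN1.symm.trans hN2
      rw [hNN] at hE1
      exact huv (hE1.symm.trans hE2)
    have hvu : ∀ t' : V, altseq f g u (stopN f g u) = t' → t' ≠ v →
        altseq f g v (stopN f g v) ≠ u := by
      intro t' htu' htne h
      obtain ⟨hN2, hE2⟩ := hrevv
      rw [h] at hE2 hN2
      rw [← hN2] at hE2
      exact htne (htu'.symm.trans hE2)
    rcases htuT with htu | htu | htu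
    · -- tu = v : contradiction via the a-walk cycle
      exfalso
      have hNaodd : ¬ Even (stopN f g a) := (S.stopN_spec hga).1
      have hNa2 : stopN f g a % 2 = 1 := Nat.not_even_iff.1 hNaodd
      have htaT : altseq f g a (stopN f g a) = b := by
        rcases (hTchar _).1 (S.stopN_spec hga).2 with h | h | h | h
        · -- ta = u impossible
          exfalso
          obtain ⟨hN3, hE3⟩ := S.stopN_rev hga
          rw [h] at hE3 hN3
          rw [← hN3] at hE3
          exact hva (hE3.symm.trans htu).symm
        · -- ta = v impossible
          exfalso
          obtain ⟨hN3, hE3⟩ := S.stopN_rev hga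
          rw [h] at hE3 hN3
          rw [← hN3] at hE3
          -- hE3 : tv = a
          obtain ⟨hN1, hE1⟩ := hrevu
          rw [htu] at hE1 hN1
          rw [← hN1] at hE1
          -- hE1 : tv = u
          exact hua (hE1.symm.trans hE3)
        · exact absurd h (S.stopN_end_ne hga)
        · exact h
      have hNa1 : stopN f g a ≠ 1 := by
        intro h1
        have : altseq f g a 1 = f a := by
          rw [show (1:ℕ) = 0 + 1 from rfl, altseq_even (by simp) f g a, altseq_zero]
        rw [h1, this] at htaT
        exact hM''e (by rw [← htaT]; exact hf a)
      have hNa3 : 3 ≤ stopN f g a := by omega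
      set Na := stopN f g a with hNadef
      obtain ⟨z, hzeq, hztop⟩ : ∃ z : ℕ → V, (∀ m, m ≤ Na → z m = altseq f g a m) ∧
          z (Na + 1) = a :=
        ⟨fun m => if m = Na + 1 then a else altseq f g a m,
          fun m hm => if_neg (by omega), if_pos rfl⟩
      have hz0 : z 0 = a := by rw [hzeq 0 (by omega)]; exact altseq_zero f g a
      have hzL : z (Na + 1) = z 0 := by rw [hztop, hz0]
      apply hnocycle
      refine cycle_contra z (Na + 1) (by omega) (by omega) hzL ?_ ?_ ?_
      · intro m hm
        rcases eq_or_lt_of_le (show m + 1 ≤ Na + 1 by omega) with h1 | h1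
        · have hm' : m = Na := by omega
          subst hm'
          rw [hzeq Na le_rfl, htaT, hztop]
          exact hadjab.symm
        · rw [hzeq m (by omega), hzeq (m+1) (by omega)]
          exact S.adj_step hga m (by omega)
      · intro i hi j hj hij
        rw [hzeq i (by omega), hzeq j (by omega)] at hij
        by_contra hne
        exact S.altseq_inj' hga (i := i) (j := j) (by omega) (by omega) hne hij
      · intro m hm
        rcases eq_or_lt_of_le (show m + 1 ≤ Na + 1 by omega) with h1 | h1
        · have hm' : m = Na := by omega
          subst hm'
          rw [hzeq Na le_rfl, htaT, hztop]
          constructor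
          · intro _; rw [Nat.not_even_iff]; omega
          · intro _; rw [Sym2.eq_swap]; exact he
        · rw [hzeq m (by omega), hzeq (m+1) (by omega)]
          by_cases hev : Even m
          · have hedge := S.edge_even hga (m := m) (by omega) hev
            constructor
            · intro hmem
              exfalso
              by_cases heq : s(altseq f g a m, altseq f g a (m+1)) = s(a, b)
              · rw [heq] at hedge; exact hM''e hedge.1
              · exact hedge.2 ⟨hmem, heq⟩
            · intro hodd; exact absurd hev hodd
          · have hedge := S.edge_odd hga (m := m) (by omega) hev
            exact ⟨fun _ => hev, fun _ => hedge.1.1⟩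
    · left
      refine ⟨htu, ?_⟩
      rcases htvT with h | h | h
      · exact absurd h (hvu a htu (Ne.symm hva))
      · exact absurd h (hexcl a htu)
      · exact h
    · right
      refine ⟨htu, ?_⟩
      rcases htvT with h | h | h
      · exact absurd h (hvu b htu (Ne.symm hvb))
      · exact h
      · exact absurd h (hexcl b htu)

  -- construct the two paths
  obtain ⟨p, hpe, hps, hppath, hpchain⟩ := S.main_path hgu
  obtain ⟨q, hqe, hqs, hqpath, hqchain⟩ := S.main_path hgv
  -- disjointness of the two walks' vertex sets
  have hdisj : ∀ i ≤ stopN f g u, ∀ j ≤ stopN f g v, altseq f g u i ≠ altseq f g v j := by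
    by_contra hc
    push_neg at hc
    obtain ⟨i, hi, j, hj, heq⟩ := hc
    have hne : {j₀ | j₀ ≤ stopN f g v ∧ ∃ i₀ ≤ stopN f g u,
        altseq f g u i₀ = altseq f g v j₀}.Nonempty := ⟨j, hj, i, hi, heq⟩
    obtain ⟨j₀, ⟨hj₀v, i₀, hi₀, heq₀⟩, hjmin⟩ :
        ∃ j₀, (j₀ ≤ stopN f g v ∧ ∃ i₀ ≤ stopN f g u,
            altseq f g u i₀ = altseq f g v j₀) ∧
          ∀ j' < j₀, ¬(j' ≤ stopN f g v ∧ ∃ i' ≤ stopN f g u,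
            altseq f g u i' = altseq f g v j') :=
      ⟨sInf {j₀ | j₀ ≤ stopN f g v ∧ ∃ i₀ ≤ stopN f g u,
          altseq f g u i₀ = altseq f g v j₀},
        Nat.sInf_mem hne, fun j' hj' => Nat.notMem_of_lt_sInf hj'⟩
    rcases Nat.eq_zero_or_pos j₀ with rfl | hj₀pos
    · rw [altseq_zero f g v] at heq₀
      rcases Nat.eq_zero_or_pos i₀ with rfl | hi₀pos
      · exact huv ((altseq_zero f g u).symm.trans heq₀)
      · rcases eq_or_lt_of_le hi₀ with hEnd | hInt
        · rw [hEnd] at heq₀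
          rcases htub with ⟨h1, _⟩ | ⟨h1, _⟩
          · exact hva (h1.symm.trans heq₀).symm
          · exact hvb (h1.symm.trans heq₀).symm
        · have hfix := S.interior_not_fix hgu i₀ hi₀pos hInt
          rw [heq₀] at hfix
          exact hfix hgv
    · by_cases hev : Even (j₀ - 1)
      · have hstep : altseq f g v j₀ = f (altseq f g v (j₀-1)) := by
          have := altseq_even hev f g v
          rwa [show j₀ - 1 + 1 = j₀ by omega] at this
        have hback : altseq f g v (j₀-1) = f (altseq f g v j₀) := by rw [hstep, S.ff]
        obtain ⟨i', hi', hfi⟩ := S.f_closure hgu hi₀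
        exact hjmin (j₀-1) (by omega) ⟨by omega, i', hi', by rw [hfi, heq₀, ← hback]⟩
      · have hfixprev : g (altseq f g v (j₀-1)) ≠ altseq f g v (j₀-1) :=
          S.stopN_goodup hgv (j₀-1) (by have := Nat.not_even_iff.1 hev; omega)
            (by omega) hev
        have hstep : altseq f g v j₀ = g (altseq f g v (j₀-1)) := by
          have := altseq_odd hev f g v
          rwa [show j₀ - 1 + 1 = j₀ by omega] at this
        have hback : g (altseq f g v j₀) = altseq f g v (j₀-1) := by
          rw [hstep, S.gg hfixprev]
        have hfixj : g (altseq f g v j₀) ≠ altseq f g v j₀ := by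
          intro hfix
          exact (S.gfix_iff _).1 hfix _ (S.hgM _ hfixprev)
            (by rw [← hstep]; exact Sym2.mem_mk_right _ _)
        obtain ⟨i', hi', hgi⟩ := S.g_closure hgu hi₀ (by rw [heq₀]; exact hfixj)
        exact hjmin (j₀-1) (by omega) ⟨by omega, i', hi', by rw [hgi, heq₀, hback]⟩
  -- vertices off both walks are not fixed by `g`
  have hnofix_of : ∀ y : V,
      (∀ i ≤ stopN f g u, altseq f g u i ≠ y) →
      (∀ j ≤ stopN f g v, altseq f g v j ≠ y) → g y ≠ y := by
    intro y h1 h2 hfix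
    rcases (hTchar y).1 hfix with h | h | h | h
    · exact h1 0 (Nat.zero_le _) (by rw [h]; exact altseq_zero f g u)
    · exact h2 0 (Nat.zero_le _) (by rw [h]; exact altseq_zero f g v)
    · rcases htub with ⟨hc1, hc2⟩ | ⟨hc1, hc2⟩
      · exact h1 _ le_rfl (by rw [h]; exact hc1)
      · exact h2 _ le_rfl (by rw [h]; exact hc2)
    · rcases htub with ⟨hc1, hc2⟩ | ⟨hc1, hc2⟩
      · exact h2 _ le_rfl (by rw [h]; exact hc2)
      · exact h1 _ le_rfl (by rw [h]; exact hc1)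
  -- off-walk vertices with an edge of the symmetric difference yield an alternating cycle
  have offwalk : ∀ x : V, s(x, f x) ∉ M \ {s(a, b)} →
      (∀ i ≤ stopN f g u, altseq f g u i ≠ x) →
      (∀ j ≤ stopN f g v, altseq f g v j ≠ x) → False := by
    intro x hxe hxu hxv
    have hnm : ∀ m, (∀ i ≤ stopN f g u, altseq f g u i ≠ altseq f g x m) ∧
        (∀ j ≤ stopN f g v, altseq f g v j ≠ altseq f g x m) := by
      intro m
      induction m with
      | zero => exact ⟨hxu, hxv⟩
      | succ m IH =>
        have hnfix : g (altseq f g x m) ≠ altseq f g x m := hnofix_of _ IH.1 IH.2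
        by_cases hev : Even m
        · have hstep : altseq f g x (m+1) = f (altseq f g x m) := altseq_even hev f g x
          have hback : altseq f g x m = f (altseq f g x (m+1)) := by rw [hstep, S.ff]
          constructor
          · intro i hi hieq
            obtain ⟨i', hi', hfi⟩ := S.f_closure hgu hi
            exact IH.1 i' hi' (by rw [hfi, hieq, ← hback])
          · intro j hj hjeq
            obtain ⟨j', hj', hfj⟩ := S.f_closure hgv hj
            exact IH.2 j' hj' (by rw [hfj, hjeq, ← hback])
        · have hstep : altseq f g x (m+1) = g (altseq f g x m) := altseq_odd hev f g x
          have hback : g (altseq f g x (m+1)) = altseq f g x m := by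
            rw [hstep, S.gg hnfix]
          have hfix1 : g (altseq f g x (m+1)) ≠ altseq f g x (m+1) := by
            intro hfix
            exact (S.gfix_iff _).1 hfix _ (S.hgM _ hnfix)
              (by rw [← hstep]; exact Sym2.mem_mk_right _ _)
          constructor
          · intro i hi hieq
            obtain ⟨i', hi', hgi⟩ := S.g_closure hgu hi (by rw [hieq]; exact hfix1)
            exact IH.1 i' hi' (by rw [hgi, hieq, hback])
          · intro j hj hjeq
            obtain ⟨j', hj', hgj⟩ := S.g_closure hgv hj (by rw [hjeq]; exact hfix1)
            exact IH.2 j' hj' (by rw [hgj, hjeq, hback])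
    have hnofix : ∀ m, g (altseq f g x m) ≠ altseq f g x m :=
      fun m => hnofix_of _ (hnm m).1 (hnm m).2
    obtain ⟨L, hLe, hL2, hzL, hinj⟩ := S.altseq_cycle hnofix
    have hL4 : 4 ≤ L := by
      rcases eq_or_lt_of_le hL2 with h2 | h2
      · exfalso
        have h1 : altseq f g x 1 = f x := by
          rw [show (1:ℕ) = 0 + 1 from rfl, altseq_even (by simp) f g x]
          exact congrArg f (altseq_zero f g x)
        have hstep2 : altseq f g x 2 = g (altseq f g x 1) :=
          altseq_odd (by decide) f g x
        rw [← h2] at hzL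
        have hedge : s(altseq f g x 1, g (altseq f g x 1)) ∈ M \ {s(a, b)} :=
          S.hgM _ (hnofix 1)
        rw [← hstep2, hzL, h1] at hedge
        exact hxe (by rw [Sym2.eq_swap (a := x) (b := f x)]; exact hedge)
      · omega
    apply hnocycle
    refine cycle_contra (altseq f g x) L hL4 hLe hzL ?_ hinj ?_
    · intro m hm
      by_cases hev : Even m
      · rw [altseq_even hev]; exact S.fadj _
      · rw [altseq_odd hev]; exact S.gadj (hnofix m)
    · intro m hm
      by_cases hev : Even m
      · constructor
        · intro hmem
          exfalso
          have hne : s(altseq f g x m, altseq f g x (m+1)) ≠ s(a, b) := by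
            intro heqe
            have hmema : altseq f g x m ∈ s(a, b) := by
              rw [← heqe]; exact Sym2.mem_mk_left _ _
            rcases Sym2.mem_iff.1 hmema with h | h
            · rcases htub with ⟨hc1, hc2⟩ | ⟨hc1, hc2⟩
              · exact (hnm m).1 _ le_rfl (hc1.trans h.symm)
              · exact (hnm m).2 _ le_rfl (hc2.trans h.symm)
            · rcases htub with ⟨hc1, hc2⟩ | ⟨hc1, hc2⟩
              · exact (hnm m).2 _ le_rfl (hc2.trans h.symm)
              · exact (hnm m).1 _ le_rfl (hc1.trans h.symm)
          have hmem₁ : s(altseq f g x m, altseq f g x (m+1)) ∈ M \ {s(a, b)} :=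
            ⟨hmem, hne⟩
          have hgstep : altseq f g x (m+1) = g (altseq f g x m) := hgU _ _ hmem₁
          have hm1odd : ¬ Even (m+1) := by
            have := Nat.even_iff.1 hev
            intro hh; rw [Nat.even_iff] at hh; omega
          have hstep2 : altseq f g x (m+2) = g (altseq f g x (m+1)) :=
            altseq_odd hm1odd f g x
          have hret : altseq f g x (m+2) = altseq f g x m := by
            rw [hstep2, hgstep, S.gg (hnofix m)]
          have hL2m : m + 2 ≤ L := by
            have := Nat.even_iff.1 hev; omega
          rcases eq_or_lt_of_le hL2m with hE | hLt
          · rw [hE, hzL] at hret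
            have hm0 : m = 0 :=
              hinj m (by omega) 0 (by omega)
                (show altseq f g x m = altseq f g x 0 from hret.symm)
            omega
          · have := hinj (m+2) hLt m (by omega) hret; omega
        · intro hodd; exact absurd hev hodd
      · have hedge : s(altseq f g x m, g (altseq f g x m)) ∈ M \ {s(a, b)} :=
          S.hgM _ (hnofix m)
        rw [← altseq_odd hev f g x] at hedge
        exact ⟨fun _ => hev, fun _ => hedge.1⟩
  -- final assembly
  refine ⟨altseq f g u (stopN f g u), altseq f g v (stopN f g v), ?_, p, q,
    hppath, hqpath, hpchain, hqchain, ?_, ?_⟩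
  · rcases htub with ⟨h1, h2⟩ | ⟨h1, h2⟩
    · rw [h1, h2]
    · rw [h1, h2]; exact Sym2.eq_swap
  · -- support disjointness
    intro y hy hy'
    rw [hps] at hy
    rw [hqs] at hy'
    obtain ⟨i, hi, hieq⟩ := List.mem_map.1 hy
    obtain ⟨j, hj, hjeq⟩ := List.mem_map.1 hy'
    exact hdisj i (by have := List.mem_range.1 hi; omega) j
      (by have := List.mem_range.1 hj; omega) (hieq.trans hjeq.symm)
  · -- edge set coverage
    ext ε
    induction ε using Sym2.ind with
    | _ x y =>
      simp only [Set.mem_setOf_eq]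
      rw [Set.mem_symmDiff]
      constructor
      · rintro (hmem | hmem)
        · rw [hpe] at hmem
          obtain ⟨m, hm, hmeq⟩ := List.mem_map.1 hmem
          rw [List.mem_range] at hm
          rw [← hmeq]
          by_cases hev : Even m
          · have h := S.edge_even hgu (m := m) hm hev
            exact Or.inr ⟨h.1, h.2⟩
          · have h := S.edge_odd hgu (m := m) hm hev
            exact Or.inl ⟨h.1, h.2⟩
        · rw [hqe] at hmem
          obtain ⟨m, hm, hmeq⟩ := List.mem_map.1 hmem
          rw [List.mem_range] at hm
          rw [← hmeq]
          by_cases hev : Even m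
          · have h := S.edge_even hgv (m := m) hm hev
            exact Or.inr ⟨h.1, h.2⟩
          · have h := S.edge_odd hgv (m := m) hm hev
            exact Or.inl ⟨h.1, h.2⟩
      · rintro (⟨h1, h2⟩ | ⟨h1, h2⟩)
        · have hy : y = g x := hgU x y h1
          subst hy
          have hgxne : g x ≠ x := by
            intro hfix
            exact (S.gfix_iff x).1 hfix _ h1 (Sym2.mem_mk_left _ _)
          have hxe : s(x, f x) ∉ M \ {s(a, b)} := by
            intro hmem
            have hfg : f x = g x := hgU x (f x) hmem
            rw [← hfg] at h2
            exact h2 (hf x)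
          by_cases hon : ∃ i ≤ stopN f g u, altseq f g u i = x
          · obtain ⟨i, hi, hix⟩ := hon
            left
            rw [hpe]
            have hmm := S.gedge_mem hgu (i := i) hi (by rw [hix]; exact hgxne)
            rw [hix] at hmm
            exact hmm
          · by_cases hon' : ∃ j ≤ stopN f g v, altseq f g v j = x
            · obtain ⟨j, hj, hjx⟩ := hon'
              right
              rw [hqe]
              have hmm := S.gedge_mem hgv (i := j) hj (by rw [hjx]; exact hgxne)
              rw [hjx] at hmm
              exact hmm
            · exfalso
              push_neg at hon hon'
              exact offwalk x hxe (fun i hi => hon i hi) (fun j hj => hon' j hj)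
        · have hy : y = f x := hfU x y h1
          subst hy
          by_cases hon : ∃ i ≤ stopN f g u, altseq f g u i = x
          · obtain ⟨i, hi, hix⟩ := hon
            left
            rw [hpe]
            have hmm := S.fedge_mem hgu (i := i) hi
            rw [hix] at hmm
            exact hmm
          · by_cases hon' : ∃ j ≤ stopN f g v, altseq f g v j = x
            · obtain ⟨j, hj, hjx⟩ := hon'
              right
              rw [hqe]
              have hmm := S.fedge_mem hgv (i := j) hj
              rw [hjx] at hmm
              exact hmm
            · exfalso
              push_neg at hon hon'
              exact offwalk x h2 (fun i hi => hon i hi) (fun j hj => hon' j hj)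

end Main

/-- Let `M` be a matching of a finite graph `G` with no alternating cycle and exactly two
unmatched vertices `u ≠ v`, let `e = s(a, b) ∈ M`, and let `M''` be a perfect matching
of `G − e`. Then `(M \\ {e}) △ M''` is a vertex-disjoint union of two alternating paths
for `M \\ {e}`, one joining `u` to one endpoint of `e` and the other joining `v` to the
other endpoint of `e`. -/
theorem stmt10 {V : Type*} [Fintype V] (G : SimpleGraph V) (M : Set (Sym2 V))
    (hM : IsMatchingOf G M)
    (hnocycle : ¬ ∃ (w : V) (c : G.Walk w w), c.IsCycle ∧ CycleAlt M c)
    (u v : V) (huv : u ≠ v)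
    (hunmatched : {w : V | ∀ e ∈ M, w ∉ e} = {u, v})
    (a b : V) (he : s(a, b) ∈ M)
    (M'' : Set (Sym2 V)) (hM'' : IsPerfectMatchingOf (G.deleteEdges {s(a, b)}) M'') :
    ∃ (c d : V), s(c, d) = s(a, b) ∧
      ∃ (p : G.Walk u c) (q : G.Walk v d),
        p.IsPath ∧ q.IsPath ∧
        p.edges.Chain' (fun e₁ e₂ => (e₁ ∈ M \ {s(a, b)} ↔ e₂ ∉ M \ {s(a, b)})) ∧
        q.edges.Chain' (fun e₁ e₂ => (e₁ ∈ M \ {s(a, b)} ↔ e₂ ∉ M \ {s(a, b)})) ∧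
        List.Disjoint p.support q.support ∧
        {e | e ∈ p.edges ∨ e ∈ q.edges} = symmDiff (M \ {s(a, b)}) M'' :=
  stmt10X G M ⟨hM.1, hM.2⟩ hnocycle u v huv hunmatched a b he M'' ⟨hM''.1, hM''.2⟩
end
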